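/- arXiv:1709.02772 — 2 statements merged into one kernel-verified Lean document; each statement's English description precedes it below -/
import Mathlib

section
/- Suppose B ∈ ℋ_n(𝔬)^{nd} is optimal and GK(B) = a. For U ∈ GL_n(𝔬), the matrix B[U] is optimal if and only if U ∈ G_a. -/
open Matrix
open scoped Classical

noncomputable section

/-- The data of a normalized additive discrete valuation `ord` on a field `F`
(`ord ϖ = 1` for a prime element `ϖ`, `ord 0 = ∞`), together with the axioms making `F`
a non-archimedean local field: `ord` is a surjective discrete valuation, the residue
field is finite, and `F` is complete. -/
structure LocalFieldData (F : Type*) [Field F] where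
  ord : F → WithTop ℤ
  ord_zero : ord 0 = ⊤
  ord_eq_top : ∀ x : F, ord x = ⊤ → x = 0
  ord_one : ord 1 = 0
  ord_neg : ∀ x : F, ord (-x) = ord x
  ord_mul : ∀ x y : F, ord (x * y) = ord x + ord y
  ord_add : ∀ x y : F, min (ord x) (ord y) ≤ ord (x + y)
  ord_surj : ∀ m : ℤ, ∃ x : F, ord x = (m : WithTop ℤ)
  residue_finite : ∃ S : Finset F, ∀ x : F, 0 ≤ ord x → ∃ s ∈ S, 0 < ord (x - s)
  complete : ∀ f : ℕ → F,
    (∀ N : ℤ, ∃ M : ℕ, ∀ m ≥ M, ∀ k ≥ M, (N : WithTop ℤ) ≤ ord (f m - f k)) →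
    ∃ L : F, ∀ N : ℤ, ∃ M : ℕ, ∀ m ≥ M, (N : WithTop ℤ) ≤ ord (f m - L)

/-- The (non-strict) lexicographic order on sequences: `y ⪯ z`. -/
def lexLE {n : ℕ} (y z : Fin n → ℤ) : Prop :=
  y = z ∨ ∃ j : Fin n, y j < z j ∧ ∀ i : Fin n, i < j → y i = z i

/-- `d` is a square in `F`. -/
def IsSq {F : Type*} [Field F] (d : F) : Prop := ∃ y : F, y ^ 2 = d

/-- `D_B = (-4)^{⌊n/2⌋} · det B`. -/
def DB {F : Type*} [Field F] {n : ℕ} (B : Matrix (Fin n) (Fin n) F) : F :=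
  (-4 : F) ^ (n / 2) * B.det

/-- The upper-left `m × m` submatrix `B^{(m)}` (junk entries `0` out of range). -/
def upperLeft {α : Type*} [Zero α] {n : ℕ} (B : Matrix (Fin n) (Fin n) α) (m : ℕ) :
    Matrix (Fin m) (Fin m) α :=
  Matrix.of fun i j =>
    if h : (i : ℕ) < n ∧ (j : ℕ) < n then B ⟨(i : ℕ), h.1⟩ ⟨(j : ℕ), h.2⟩ else 0

/-- The first `m` entries of a sequence (junk value `0` out of range). -/
def restrictSeq {n : ℕ} (a : Fin n → ℤ) (m : ℕ) : Fin m → ℤ :=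
  fun i => if h : (i : ℕ) < n then a ⟨(i : ℕ), h⟩ else 0

/-- An `a`-admissible involution `σ` (Definition 1.6). -/
def Admissible {n : ℕ} (a : Fin n → ℤ) (σ : Equiv.Perm (Fin n)) : Prop :=
  (∀ i, σ (σ i) = i) ∧
  -- (i) 𝒫⁰ has at most two elements
  (∀ i j k : Fin n, σ i = i → σ j = j → σ k = k → i = j ∨ i = k ∨ j = k) ∧
  -- (i) two distinct fixed points have different parities of `a`
  (∀ i j : Fin n, σ i = i → σ j = j → i ≠ j → ¬ (a i % 2 = a j % 2)) ∧
  -- (i) a fixed point is maximal in its block and maximal among `𝒫⁰ ∪ 𝒫⁺` of the same parity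
  (∀ i : Fin n, σ i = i →
    (∀ j : Fin n, a j = a i → j ≤ i) ∧
    ∀ j : Fin n, (σ j = j ∨ a (σ j) < a j) → a j % 2 = a i % 2 → j ≤ i) ∧
  -- (ii) at most one element of `I_s ∩ 𝒫⁻`
  (∀ i j : Fin n, a i = a j → a i < a (σ i) → a j < a (σ j) → i = j) ∧
  -- (ii) an element of `I_s ∩ 𝒫⁻` is maximal in `I_s` and is paired with the minimum
  (∀ i : Fin n, a i < a (σ i) →
    (∀ j : Fin n, a j = a i → j ≤ i) ∧
    IsLeast {j : Fin n | a (σ j) < a j ∧ i < j ∧ a j % 2 = a i % 2} (σ i)) ∧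
  -- (iii) at most one element of `I_s ∩ 𝒫⁺`
  (∀ i j : Fin n, a i = a j → a (σ i) < a i → a (σ j) < a j → i = j) ∧
  -- (iii) an element of `I_s ∩ 𝒫⁺` is minimal in `I_s` and is paired with the maximum
  (∀ i : Fin n, a (σ i) < a i →
    (∀ j : Fin n, a j = a i → i ≤ j) ∧
    IsGreatest {j : Fin n | a j < a (σ j) ∧ j < i ∧ a j % 2 = a i % 2} (σ i)) ∧
  -- (iv)
  (∀ i : Fin n, a i = a (σ i) → (((i : ℕ) : ℤ) - ((σ i : Fin n) : ℕ)).natAbs ≤ 1)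

/-- The combinatorial data of a decomposition of an `n × n` matrix into `r` consecutive
diagonal blocks, each of size `1` or `2`, the `s`-th block being scaled by `2^(k s)`:
`c` is the sequence of cumulative block boundaries. -/
structure BlockData (n : ℕ) where
  r : ℕ
  c : ℕ → ℕ
  k : ℕ → ℕ
  c_zero : c 0 = 0
  c_last : c r = n
  c_lt : ∀ s < r, c s < c (s + 1)
  size_le : ∀ s < r, c (s + 1) ≤ c s + 2

namespace BlockData

variable {n : ℕ} (bd : BlockData n)

/-- `i` belongs to the `s`-th block. -/
def InBlock (s : ℕ) (i : Fin n) : Prop := bd.c s ≤ (i : ℕ) ∧ (i : ℕ) < bd.c (s + 1)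

/-- The size (`deg C_s`) of the `s`-th block. -/
def size (s : ℕ) : ℕ := bd.c (s + 1) - bd.c s

end BlockData

/-- The description of the maximal constant blocks of a non-decreasing sequence `a`:
`Ns` is the sequence of cumulative block lengths `n_s^*` and `ms` the sequence of values. -/
def BlocksOf {n : ℕ} (a : Fin n → ℤ) (r : ℕ) (Ns : ℕ → ℕ) (ms : ℕ → ℤ) : Prop :=
  Ns 0 = 0 ∧ Ns r = n ∧ (∀ s < r, Ns s < Ns (s + 1)) ∧
  (∀ s < r, ∀ i : Fin n, Ns s ≤ (i : ℕ) → (i : ℕ) < Ns (s + 1) → a i = ms s) ∧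
  (∀ s, s + 1 < r → ms s < ms (s + 1))

/-- `(n₁,…,n_r; m₁,…,m_r; ζ₁,…,ζ_r)` (encoded via the cumulative sums `Ns (s+1) = n_{s+1}^*`,
`ms s = m_{s+1}`, `zs s = ζ_{s+1}`) is an EGK datum of length `n` (Definition 4.2). -/
def IsEGKDatum (n r : ℕ) (Ns : ℕ → ℕ) (ms zs : ℕ → ℤ) : Prop :=
  Ns 0 = 0 ∧ Ns r = n ∧ (∀ s < r, Ns s < Ns (s + 1)) ∧
  (∀ s < r, 0 ≤ ms s) ∧ (∀ s, s + 1 < r → ms s < ms (s + 1)) ∧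
  (∀ s < r, zs s = 0 ∨ zs s = 1 ∨ zs s = -1) ∧
  -- (E2)
  (∀ s < r, Even (Ns (s + 1)) →
    (zs s ≠ 0 ↔ Even (∑ u ∈ Finset.range (s + 1), ms u * ((Ns (u + 1) : ℤ) - (Ns u : ℤ))))) ∧
  -- (E3)
  (∀ s < r, ¬ Even (Ns (s + 1)) →
    zs s ≠ 0 ∧
    ((∀ i < s, Even (Ns (i + 1))) →
      zs s = ∏ u ∈ Finset.range s, zs u ^ (ms u + ms (u + 1)).toNat) ∧
    (∀ t < s, ¬ Even (Ns (t + 1)) → (∀ i, t < i → i < s → Even (Ns (i + 1))) →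
      Even ((∑ u ∈ Finset.range s, ms u * ((Ns (u + 1) : ℤ) - (Ns u : ℤ))) +
        ms s * ((Ns (s + 1) : ℤ) - (Ns s : ℤ) - 1)) →
      zs s = zs t * ∏ u ∈ Finset.Ico (t + 1) s, zs u ^ (ms u + ms (u + 1)).toNat))

/-- `(a₁,…,a_n; ε₁,…,ε_n)` is a naive EGK datum of length `n` (Definition 4.1);
the index `i : Fin n` corresponds to the (1-based) index `(i : ℕ) + 1` of the paper. -/
def IsNaiveEGK (n : ℕ) (a ε : Fin n → ℤ) : Prop :=
  (∀ i, 0 ≤ a i) ∧ (∀ i j : Fin n, i ≤ j → a i ≤ a j) ∧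
  (∀ i, ε i = 0 ∨ ε i = 1 ∨ ε i = -1) ∧
  -- (N2)
  (∀ i : Fin n, Even ((i : ℕ) + 1) →
    (ε i ≠ 0 ↔ Even (∑ j ∈ Finset.univ.filter (fun j : Fin n => j ≤ i), a j))) ∧
  -- (N3)
  (∀ i : Fin n, ¬ Even ((i : ℕ) + 1) → ε i ≠ 0) ∧
  -- (N4)
  (∀ h : 0 < n, ε ⟨0, h⟩ = 1) ∧
  -- (N5)
  (∀ i : Fin n, 2 ≤ (i : ℕ) → ¬ Even ((i : ℕ) + 1) →
    Even (∑ j ∈ Finset.univ.filter (fun j : Fin n => j < i), a j) →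
    ∀ (h2 : (i : ℕ) - 2 < n) (h1 : (i : ℕ) - 1 < n),
      ε i = ε ⟨(i : ℕ) - 2, h2⟩ * ε ⟨(i : ℕ) - 1, h1⟩ ^ (a i + a ⟨(i : ℕ) - 1, h1⟩).toNat)

/-- `Υ(a₁,…,a_n; ε₁,…,ε_n) = (n₁,…,n_r; m₁,…,m_r; ζ₁,…,ζ_r)` (encoded via cumulative
block lengths `Ns`). -/
def UpsilonRel (n : ℕ) (a ε : Fin n → ℤ) (r : ℕ) (Ns : ℕ → ℕ) (ms zs : ℕ → ℤ) : Prop :=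
  BlocksOf a r Ns ms ∧
  (∀ s < r, ∀ h : Ns (s + 1) - 1 < n, zs s = ε ⟨Ns (s + 1) - 1, h⟩)

/-- The Hilbert symbol `⟨a, b⟩ ∈ {±1}`. -/
def hilbertSym {F : Type*} [Field F] (a b : F) : ℤ :=
  if ∃ x y : F, a * x ^ 2 + b * y ^ 2 = 1 then 1 else -1

/-- `e` is the Clifford invariant `η_B` of `B` (Definition 1.4), computed via a
`GL_n(F)`-diagonalization of `B`. -/
def IsCliffordInv {F : Type*} [Field F] {n : ℕ} (B : Matrix (Fin n) (Fin n) F) (e : ℤ) :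
    Prop :=
  ∃ (P : Matrix (Fin n) (Fin n) F) (d : Fin n → F),
    IsUnit P.det ∧ Pᵀ * B * P = Matrix.diagonal d ∧
    e = hilbertSym (-1) (-1 : F) ^ ((n + 1) / 4) * hilbertSym (-1) B.det ^ ((n - 1) / 2) *
      ∏ j : Fin n, ∏ i ∈ Finset.univ.filter (fun i : Fin n => i < j), hilbertSym (d i) (d j)

namespace LocalFieldData

variable {F : Type*} [Field F] (v : LocalFieldData F)

/-- `x` lies in the ring of integers `𝔬`. -/
def Integer (x : F) : Prop := 0 ≤ v.ord x

/-- `ord` as an integer-valued function (junk value `0` at `x = 0`). -/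
def ordZ (x : F) : ℤ := (v.ord x).untopD 0

/-- `U ∈ GL_n(𝔬)`. -/
def IsUnimodular {n : ℕ} (U : Matrix (Fin n) (Fin n) F) : Prop :=
  (∀ i j, v.Integer (U i j)) ∧ v.ord U.det = 0

/-- `B` and `B'` are `GL_n(𝔬)`-equivalent. -/
def Equivalent {n : ℕ} (B B' : Matrix (Fin n) (Fin n) F) : Prop :=
  ∃ U : Matrix (Fin n) (Fin n) F, v.IsUnimodular U ∧ B' = Uᵀ * B * U

/-- `B ∈ ℋ_n(𝔬)`: a half-integral symmetric matrix. -/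
def IsHalfIntegral {n : ℕ} (B : Matrix (Fin n) (Fin n) F) : Prop :=
  B.IsSymm ∧ (∀ i, v.Integer (B i i)) ∧ ∀ i j, v.Integer (2 * B i j)

/-- `B ∈ 𝓜(a)`: `ord(b_ii) ≥ a_i` and `ord(2 b_ij) ≥ (a_i + a_j)/2`. -/
def MemM {n : ℕ} (B : Matrix (Fin n) (Fin n) F) (a : Fin n → ℤ) : Prop :=
  (∀ i, (a i : WithTop ℤ) ≤ v.ord (B i i)) ∧
  ∀ i j, ((a i + a j : ℤ) : WithTop ℤ) ≤ v.ord (2 * B i j) + v.ord (2 * B i j)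

/-- `a ∈ S(B)`. -/
def MemS {n : ℕ} (B : Matrix (Fin n) (Fin n) F) (a : Fin n → ℤ) : Prop :=
  (∀ i, 0 ≤ a i) ∧ (∀ i j : Fin n, i ≤ j → a i ≤ a j) ∧ v.MemM B a

/-- `a ∈ 𝐒({B})`. -/
def MemSS {n : ℕ} (B : Matrix (Fin n) (Fin n) F) (a : Fin n → ℤ) : Prop :=
  ∃ U : Matrix (Fin n) (Fin n) F, v.IsUnimodular U ∧ v.MemS (Uᵀ * B * U) a

/-- `a` is the Gross–Keating invariant of `B`: the greatest element of `𝐒({B})` in the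
lexicographic order. -/
def IsGK {n : ℕ} (B : Matrix (Fin n) (Fin n) F) (a : Fin n → ℤ) : Prop :=
  v.MemSS B a ∧ ∀ b : Fin n → ℤ, v.MemSS B b → lexLE b a

/-- `B` is optimal: `GK(B) ∈ S(B)`. -/
def IsOptimal {n : ℕ} (B : Matrix (Fin n) (Fin n) F) : Prop :=
  ∃ a : Fin n → ℤ, v.IsGK B a ∧ v.MemS B a

/-- Membership condition for the group `G_a`:
`ord(g_ij) ≥ (a_j - a_i)/2` whenever `a_i < a_j`. -/
def GCond {n : ℕ} (a : Fin n → ℤ) (g : Matrix (Fin n) (Fin n) F) : Prop :=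
  ∀ i j : Fin n, a i < a j → ((a j - a i : ℤ) : WithTop ℤ) ≤ v.ord (g i j) + v.ord (g i j)

/-- `F(√d)/F` is a quadratic unramified extension, characterized via local class field
theory: `d` is not a square, and every unit of `𝔬` is a norm from `F(√d)`. -/
def UnramifiedQuadratic (d : F) : Prop :=
  ¬ IsSq d ∧ ∀ x : F, v.ord x = 0 → ∃ a b : F, x = a ^ 2 - d * b ^ 2

/-- `ξ_B ∈ {1, -1, 0}` according as `D_B` is a square, `F(√D_B)/F` is unramified quadratic,
or `F(√D_B)/F` is ramified. -/
def xi {n : ℕ} (B : Matrix (Fin n) (Fin n) F) : ℤ :=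
  if IsSq (DB B) then 1 else if v.UnramifiedQuadratic (DB B) then -1 else 0

/-- `ord 𝔇` for the quadratic extension `F(√d)/F`: the minimal valuation of the
discriminant `4 y² d` of an integral generator `x + y √d` of `F[√d]`. -/
def discOrd (d : F) : ℤ :=
  sInf {m : ℤ | ∃ x y : F, v.Integer (2 * x) ∧ v.Integer (x ^ 2 - d * y ^ 2) ∧
    v.ord (4 * y ^ 2 * d) = (m : WithTop ℤ)}

/-- `Δ(B)` (Definition 1.3). -/
def Delta {n : ℕ} (B : Matrix (Fin n) (Fin n) F) : ℤ :=
  if Even n then v.ordZ (DB B) - v.discOrd (DB B) + 1 - (v.xi B) ^ 2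
  else v.ordZ (DB B)

/-- `B` is a reduced form of GK-type `(a, σ)` (Definition 1.8). -/
def IsReducedForm {n : ℕ} (B : Matrix (Fin n) (Fin n) F) (a : Fin n → ℤ)
    (σ : Equiv.Perm (Fin n)) : Prop :=
  v.MemM B a ∧
  -- (1)
  (∀ i : Fin n, σ i ≠ i →
    v.ord (2 * B i (σ i)) + v.ord (2 * B i (σ i)) = ((a i + a (σ i) : ℤ) : WithTop ℤ)) ∧
  (∀ i : Fin n, a i < a (σ i) → v.ord (B i i) = (a i : WithTop ℤ)) ∧
  -- (2)
  (∀ i : Fin n, σ i = i → v.ord (B i i) = (a i : WithTop ℤ)) ∧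
  -- (3)
  (∀ i j : Fin n, j ≠ i → j ≠ σ i →
    ((a i + a j : ℤ) : WithTop ℤ) < v.ord (2 * B i j) + v.ord (2 * B i j))

/-- The `s`-th block of `B` is `2^{k_s} C_s` with `C_s` a unimodular diagonal matrix. -/
def DiagBlock {n : ℕ} (B : Matrix (Fin n) (Fin n) F) (bd : BlockData n) (s : ℕ) : Prop :=
  ∀ i j : Fin n, bd.InBlock s i → bd.InBlock s j →
    (i = j → v.ord (B i i) = ((bd.k s : ℤ) : WithTop ℤ)) ∧ (i ≠ j → B i j = 0)

/-- The `s`-th block of `B` is `2^{k_s} C_s` with `C_s ∈ ½(S₂(𝔬)_e ∩ GL₂(𝔬))`. -/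
def EvenBlock {n : ℕ} (B : Matrix (Fin n) (Fin n) F) (bd : BlockData n) (s : ℕ) : Prop :=
  bd.c (s + 1) = bd.c s + 2 ∧
  ∀ i j : Fin n, bd.InBlock s i → bd.InBlock s j →
    (i = j → ((bd.k s : ℤ) : WithTop ℤ) ≤ v.ord (B i i)) ∧
    (i ≠ j → v.ord (2 * B i j) = ((bd.k s : ℤ) : WithTop ℤ))

/-- `B = 2^{k₁}C₁ ⊥ ⋯ ⊥ 2^{k_r}C_r` is a pre-optimal form (Definition 2.2), with the
block decomposition recorded by `bd`. -/
def IsPreOptimal {n : ℕ} (B : Matrix (Fin n) (Fin n) F) (bd : BlockData n) : Prop :=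
  v.IsHalfIntegral B ∧ B.det ≠ 0 ∧
  (∀ s t : ℕ, s < bd.r → t < bd.r → s ≠ t →
    ∀ i j : Fin n, bd.InBlock s i → bd.InBlock t j → B i j = 0) ∧
  (∀ s < bd.r, v.DiagBlock B bd s ∨ v.EvenBlock B bd s) ∧
  -- (PO1): `Σ_{j ∈ 𝒟_m} deg C_j ≤ 2`
  (∀ s t : ℕ, s < bd.r → t < bd.r → s ≠ t → v.DiagBlock B bd s → v.DiagBlock B bd t →
    bd.k s = bd.k t → bd.size s + bd.size t ≤ 2) ∧
  (∀ s t u : ℕ, s < bd.r → t < bd.r → u < bd.r → s ≠ t → s ≠ u → t ≠ u →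
    v.DiagBlock B bd s → v.DiagBlock B bd t → v.DiagBlock B bd u →
    bd.k s = bd.k t → bd.k t = bd.k u → False) ∧
  -- (PO1): `ℰ_m` is a set of consecutive integers
  (∀ s t u : ℕ, s ≤ t → t ≤ u → u < bd.r → v.EvenBlock B bd s → v.EvenBlock B bd u →
    bd.k s = bd.k u → v.EvenBlock B bd t ∧ bd.k t = bd.k s) ∧
  -- (PO2)
  (∀ s t : ℕ, s < t → t < bd.r →
    (v.DiagBlock B bd s → v.DiagBlock B bd t → bd.k s ≤ bd.k t) ∧
    (v.EvenBlock B bd s → v.EvenBlock B bd t → bd.k s ≤ bd.k t) ∧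
    (v.DiagBlock B bd s → v.EvenBlock B bd t → bd.k s + 1 ≤ bd.k t) ∧
    (v.EvenBlock B bd s → v.DiagBlock B bd t → bd.k s ≤ bd.k t + 1)) ∧
  -- (PO3)
  (∀ s < bd.r, v.DiagBlock B bd s → bd.size s = 2 →
    1 ≤ s ∧
    ((Even (bd.c (s + 1)) ∧ v.xi (upperLeft B (bd.c s)) = 0 ∧
        v.xi (upperLeft B (bd.c (s + 1))) = 0) ∨
      (Odd (bd.c s) ∧ Even (v.ordZ (Matrix.det (upperLeft B (bd.c s))) + (bd.k s : ℤ))))) ∧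
  -- (PO4)
  (∀ s < bd.r, 1 ≤ s → bd.k (s - 1) = bd.k s + 1 → v.DiagBlock B bd s →
    v.EvenBlock B bd (s - 1) →
    bd.size s = 2 ∨
      (bd.size s = 1 ∧
        ((Even (bd.c (s + 1)) ∧ Even (v.ordZ (Matrix.det (upperLeft B (bd.c (s + 1)))))) ∨
          (Odd (bd.c (s + 1)) ∧ v.xi (upperLeft B (bd.c s)) = 0)))) ∧
  -- (PO5)
  (∀ s : ℕ, s + 1 < bd.r → v.DiagBlock B bd s → v.EvenBlock B bd (s + 1) →
    bd.k (s + 1) = bd.k s + 1 →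
    bd.size s = 1 ∧
      ((Even (bd.c (s + 1)) ∧ Odd (v.ordZ (Matrix.det (upperLeft B (bd.c (s + 1)))))) ∨
        (Odd (bd.c (s + 1)) ∧ (1 ≤ s → v.xi (upperLeft B (bd.c s)) ≠ 0)))) ∧
  -- (PO6)
  (∀ s : ℕ, s + 1 < bd.r → Even (bd.c (s + 1)) → v.DiagBlock B bd s →
    v.DiagBlock B bd (s + 1) → bd.k (s + 1) = bd.k s + 1 →
    v.xi (upperLeft B (bd.c (s + 1))) = 0)

/-- The statement of Theorem 3.1 at the `s`-th block of a pre-optimal form `B`, for the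
(0-indexed) sequence `aN` of entries of `GK(B)`. -/
def GKFormulaAt {n : ℕ} (B : Matrix (Fin n) (Fin n) F) (bd : BlockData n)
    (aN : ℕ → ℤ) (s : ℕ) : Prop :=
  -- (1)
  (v.EvenBlock B bd s →
    aN (bd.c (s + 1) - 2) = (bd.k s : ℤ) ∧ aN (bd.c (s + 1) - 1) = (bd.k s : ℤ)) ∧
  -- (2)
  (v.DiagBlock B bd s → bd.size s = 1 →
    -- (2.1)
    (Odd (bd.c (s + 1)) →
      (Odd (v.ordZ (Matrix.det (upperLeft B (bd.c s)))) →
        aN (bd.c (s + 1) - 1) = (bd.k s : ℤ) + 2) ∧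
      (Even (v.ordZ (Matrix.det (upperLeft B (bd.c s)))) → v.xi (upperLeft B (bd.c s)) = 0 →
        aN (bd.c (s + 1) - 1) = (bd.k s : ℤ) + 1) ∧
      (v.xi (upperLeft B (bd.c s)) ≠ 0 → aN (bd.c (s + 1) - 1) = (bd.k s : ℤ))) ∧
    -- (2.2)
    (Even (bd.c (s + 1)) →
      (Odd (v.ordZ (Matrix.det (upperLeft B (bd.c (s + 1))))) →
        aN (bd.c (s + 1) - 1) = (bd.k s : ℤ)) ∧
      (Even (v.ordZ (Matrix.det (upperLeft B (bd.c (s + 1))))) →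
        v.xi (upperLeft B (bd.c (s + 1))) = 0 →
        aN (bd.c (s + 1) - 1) = (bd.k s : ℤ) + 1) ∧
      (v.xi (upperLeft B (bd.c (s + 1))) ≠ 0 → aN (bd.c (s + 1) - 1) = (bd.k s : ℤ) + 2))) ∧
  -- (3)
  (v.DiagBlock B bd s → bd.size s = 2 →
    aN (bd.c (s + 1) - 2) = (bd.k s : ℤ) + 1 ∧ aN (bd.c (s + 1) - 1) = (bd.k s : ℤ) + 1)

/-- `(n₁,…,n_r; m₁,…,m_r; ζ₁,…,ζ_r)` (encoded via cumulative block lengths `Ns`) is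
the extended Gross–Keating datum `EGK(B)` of `B` (Definition 1.5), computed from an
optimal form `B'` equivalent to `B`. -/
def IsEGK {n : ℕ} (B : Matrix (Fin n) (Fin n) F) (r : ℕ) (Ns : ℕ → ℕ) (ms zs : ℕ → ℤ) :
    Prop :=
  ∃ B' : Matrix (Fin n) (Fin n) F, v.Equivalent B B' ∧
    ∃ a : Fin n → ℤ, v.IsGK B' a ∧ v.MemS B' a ∧ BlocksOf a r Ns ms ∧
      ∀ s < r, (Even (Ns (s + 1)) → zs s = v.xi (upperLeft B' (Ns (s + 1)))) ∧
        (¬ Even (Ns (s + 1)) → IsCliffordInv (upperLeft B' (Ns (s + 1))) (zs s))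

end LocalFieldData


section AuxiliaryLemmas

open Finset

variable {F : Type*} [Field F]

namespace LocalFieldData

variable (v : LocalFieldData F)

lemma integer_zero : v.Integer 0 := by
  unfold LocalFieldData.Integer; rw [v.ord_zero]; exact le_top

lemma integer_one : v.Integer 1 := by
  unfold LocalFieldData.Integer; rw [v.ord_one]

lemma integer_add {x y : F} (hx : v.Integer x) (hy : v.Integer y) : v.Integer (x + y) :=
  le_trans (le_min hx hy) (v.ord_add x y)

lemma integer_neg {x : F} (hx : v.Integer x) : v.Integer (-x) := by
  unfold LocalFieldData.Integer at hx ⊢; rw [v.ord_neg]; exact hx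

lemma integer_mul {x y : F} (hx : v.Integer x) (hy : v.Integer y) : v.Integer (x * y) := by
  unfold LocalFieldData.Integer at hx hy ⊢; rw [v.ord_mul]; exact add_nonneg hx hy

lemma integer_sum {ι : Type*} (s : Finset ι) (f : ι → F)
    (h : ∀ i ∈ s, v.Integer (f i)) : v.Integer (∑ i ∈ s, f i) := by
  induction s using Finset.cons_induction with
  | empty => simpa using v.integer_zero
  | cons a s ha ih =>
      rw [Finset.sum_cons]
      exact v.integer_add (h a (Finset.mem_cons_self a s))
        (ih fun i hi => h i (Finset.mem_cons_of_mem hi))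

lemma integer_prod {ι : Type*} (s : Finset ι) (f : ι → F)
    (h : ∀ i ∈ s, v.Integer (f i)) : v.Integer (∏ i ∈ s, f i) := by
  induction s using Finset.cons_induction with
  | empty => simpa using v.integer_one
  | cons a s ha ih =>
      rw [Finset.prod_cons]
      exact v.integer_mul (h a (Finset.mem_cons_self a s))
        (ih fun i hi => h i (Finset.mem_cons_of_mem hi))

lemma integer_det {n : ℕ} {M : Matrix (Fin n) (Fin n) F}
    (h : ∀ i j, v.Integer (M i j)) : v.Integer M.det := by
  rw [Matrix.det_apply]
  refine v.integer_sum _ _ fun σ _ => ?_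
  rcases Int.units_eq_one_or (Equiv.Perm.sign σ) with hs | hs <;> rw [hs]
  · simpa using v.integer_prod _ _ fun i _ => h (σ i) i
  · have : ((-1 : ℤˣ) : ℤ) • (∏ i, M (σ i) i) = -(∏ i, M (σ i) i) := by
      simp
    rw [Units.smul_def, this]
    exact v.integer_neg (v.integer_prod _ _ fun i _ => h (σ i) i)

lemma ord_inv_eq_zero {x : F} (hx : v.ord x = 0) : v.ord x⁻¹ = 0 := by
  have hx0 : x ≠ 0 := by
    intro h; rw [h, v.ord_zero] at hx; exact absurd hx (by simp)
  have h := v.ord_mul x x⁻¹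
  rw [mul_inv_cancel₀ hx0, v.ord_one, hx, zero_add] at h
  exact h.symm

lemma det_ne_zero_of_unimodular {n : ℕ} {U : Matrix (Fin n) (Fin n) F}
    (hU : v.IsUnimodular U) : U.det ≠ 0 := by
  intro h
  have := hU.2
  rw [h, v.ord_zero] at this
  exact absurd this (by simp)

lemma unimodular_one {n : ℕ} : v.IsUnimodular (1 : Matrix (Fin n) (Fin n) F) := by
  constructor
  · intro i j
    rcases eq_or_ne i j with rfl | h
    · simpa [Matrix.one_apply] using v.integer_one
    · simpa [Matrix.one_apply, h] using v.integer_zero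
  · rw [Matrix.det_one, v.ord_one]

lemma unimodular_mul {n : ℕ} {U W : Matrix (Fin n) (Fin n) F}
    (hU : v.IsUnimodular U) (hW : v.IsUnimodular W) : v.IsUnimodular (U * W) := by
  constructor
  · intro i j
    rw [Matrix.mul_apply]
    exact v.integer_sum _ _ fun k _ => v.integer_mul (hU.1 i k) (hW.1 k j)
  · rw [Matrix.det_mul, v.ord_mul, hU.2, hW.2, add_zero]

lemma unimodular_inv {n : ℕ} {U : Matrix (Fin n) (Fin n) F}
    (hU : v.IsUnimodular U) : v.IsUnimodular U⁻¹ := by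
  have hdet := v.det_ne_zero_of_unimodular hU
  have hadj : ∀ i j, v.Integer (U.adjugate i j) := by
    intro i j
    rw [Matrix.adjugate_apply]
    refine v.integer_det fun k l => ?_
    rw [Matrix.updateRow_apply]
    split
    · rcases eq_or_ne l i with rfl | h
      · simpa [Pi.single_apply] using v.integer_one
      · simpa [Pi.single_apply, h] using v.integer_zero
    · exact hU.1 k l
  constructor
  · intro i j
    rw [Matrix.inv_def, Matrix.smul_apply, Ring.inverse_eq_inv', smul_eq_mul]
    exact v.integer_mul (le_of_eq (v.ord_inv_eq_zero hU.2).symm) (hadj i j)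
  · rw [Matrix.det_nonsing_inv, Ring.inverse_eq_inv']
    exact v.ord_inv_eq_zero hU.2

lemma conj_inv_conj {n : ℕ} {U B : Matrix (Fin n) (Fin n) F}
    (hU : v.IsUnimodular U) : (U⁻¹)ᵀ * (Uᵀ * B * U) * U⁻¹ = B := by
  have hdet : IsUnit U.det := isUnit_iff_ne_zero.2 (v.det_ne_zero_of_unimodular hU)
  have h1 : U * U⁻¹ = 1 := Matrix.mul_nonsing_inv U hdet
  have h2 : (U⁻¹)ᵀ * Uᵀ = 1 := by
    rw [← Matrix.transpose_mul, h1, Matrix.transpose_one]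
  calc (U⁻¹)ᵀ * (Uᵀ * B * U) * U⁻¹
      = ((U⁻¹)ᵀ * Uᵀ) * B * (U * U⁻¹) := by
        simp only [Matrix.mul_assoc]
    _ = B := by rw [h1, h2, Matrix.one_mul, Matrix.mul_one]

lemma memSS_conj {n : ℕ} {U B : Matrix (Fin n) (Fin n) F}
    (hU : v.IsUnimodular U) (b : Fin n → ℤ) :
    v.MemSS (Uᵀ * B * U) b ↔ v.MemSS B b := by
  constructor
  · rintro ⟨W, hW, h⟩
    refine ⟨U * W, v.unimodular_mul hU hW, ?_⟩
    have e : (U * W)ᵀ * B * (U * W) = Wᵀ * (Uᵀ * B * U) * W := by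
      simp only [Matrix.transpose_mul, Matrix.mul_assoc]
    rw [e]; exact h
  · rintro ⟨W, hW, h⟩
    refine ⟨U⁻¹ * W, v.unimodular_mul (v.unimodular_inv hU) hW, ?_⟩
    have e : (U⁻¹ * W)ᵀ * (Uᵀ * B * U) * (U⁻¹ * W)
        = Wᵀ * ((U⁻¹)ᵀ * (Uᵀ * B * U) * U⁻¹) * W := by
      simp only [Matrix.transpose_mul, Matrix.mul_assoc]
    rw [e, v.conj_inv_conj hU]; exact h

end LocalFieldData

lemma lexLE_antisymm {n : ℕ} {a b : Fin n → ℤ} (h1 : lexLE a b) (h2 : lexLE b a) :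
    a = b := by
  rcases h1 with rfl | ⟨j, hj, hj'⟩
  · rfl
  rcases h2 with rfl | ⟨k, hk, hk'⟩
  · exact absurd hj (lt_irrefl _)
  rcases lt_trichotomy j k with h | rfl | h
  · exact absurd (hk' j h).symm (ne_of_lt hj)
  · exact absurd (hj.trans hk) (lt_irrefl _)
  · exact absurd (hj' k h).symm (ne_of_lt hk)

namespace LocalFieldData

variable (v : LocalFieldData F)

lemma le_of_double {c : ℤ} {x : WithTop ℤ}
    (h : ((c + c : ℤ) : WithTop ℤ) ≤ x + x) : (c : WithTop ℤ) ≤ x := by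
  induction x using WithTop.recTopCoe with
  | top => exact le_top
  | coe x =>
      have h' : c + c ≤ x + x := by exact_mod_cast h
      exact_mod_cast (by linarith : c ≤ x)

lemma double_min {x y c : WithTop ℤ} (hx : c ≤ x + x) (hy : c ≤ y + y) :
    c ≤ min x y + min x y := by
  rcases le_total x y with h | h
  · rwa [min_eq_left h]
  · rwa [min_eq_right h]

lemma double_ord_add {x y : F} {c : WithTop ℤ}
    (hx : c ≤ v.ord x + v.ord x) (hy : c ≤ v.ord y + v.ord y) :
    c ≤ v.ord (x + y) + v.ord (x + y) :=
  le_trans (double_min hx hy) (add_le_add (v.ord_add x y) (v.ord_add x y))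

lemma double_ord_sum {ι : Type*} (s : Finset ι) (f : ι → F) {c : WithTop ℤ}
    (h : ∀ i ∈ s, c ≤ v.ord (f i) + v.ord (f i)) :
    c ≤ v.ord (∑ i ∈ s, f i) + v.ord (∑ i ∈ s, f i) := by
  induction s using Finset.cons_induction with
  | empty => simp [v.ord_zero]
  | cons a s ha ih =>
      rw [Finset.sum_cons]
      exact v.double_ord_add (h a (Finset.mem_cons_self a s))
        (ih fun i hi => h i (Finset.mem_cons_of_mem hi))

end LocalFieldData

lemma offdiag_decomp {M : Type*} [AddCommMonoid M] {n : ℕ} (g : Fin n → Fin n → M) :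
    ∑ l : Fin n, ∑ k : Fin n, g l k
      = (∑ l : Fin n, g l l)
        + ∑ l : Fin n, ∑ k : Fin n, (if l < k then g l k + g k l else 0) := by
  have key : ∀ l k : Fin n, g l k
      = (if l = k then g l k else 0)
        + ((if l < k then g l k else 0) + (if k < l then g l k else 0)) := by
    intro l k
    rcases lt_trichotomy l k with h | h | h
    · simp [h, h.ne, asymm h]
    · simp [h, lt_irrefl]
    · simp [h, h.ne', asymm h]
  calc ∑ l : Fin n, ∑ k : Fin n, g l k
      = ∑ l : Fin n, ∑ k : Fin n,
          ((if l = k then g l k else 0)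
            + ((if l < k then g l k else 0) + (if k < l then g l k else 0))) := by
        refine Finset.sum_congr rfl fun l _ => Finset.sum_congr rfl fun k _ => key l k
    _ = (∑ l : Fin n, ∑ k : Fin n, if l = k then g l k else 0)
        + ((∑ l : Fin n, ∑ k : Fin n, if l < k then g l k else 0)
          + (∑ l : Fin n, ∑ k : Fin n, if k < l then g l k else 0)) := by
        simp [Finset.sum_add_distrib]
    _ = (∑ l : Fin n, g l l)
        + ((∑ l : Fin n, ∑ k : Fin n, if l < k then g l k else 0)
          + (∑ l : Fin n, ∑ k : Fin n, if l < k then g k l else 0)) := by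
        rw [Finset.sum_comm (f := fun l k => if k < l then g l k else 0)]
        simp [Finset.sum_ite_eq]
    _ = (∑ l : Fin n, g l l)
        + ∑ l : Fin n, ∑ k : Fin n, (if l < k then g l k + g k l else 0) := by
        rw [← Finset.sum_add_distrib]
        congr 1
        refine Finset.sum_congr rfl fun l _ => ?_
        rw [← Finset.sum_add_distrib]
        refine Finset.sum_congr rfl fun k _ => ?_
        split <;> simp

end AuxiliaryLemmas

namespace LocalFieldData

variable {F : Type*} [Field F] (v : LocalFieldData F)

lemma coe3_le {x y z : ℤ} {p q r : WithTop ℤ} (hx : (x : WithTop ℤ) ≤ p + p)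
    (hy : (y : WithTop ℤ) ≤ q + q) (hz : (z : WithTop ℤ) ≤ r + r) {c : ℤ}
    (hc : c ≤ x + y + z) : ((c : ℤ) : WithTop ℤ) ≤ (p + q + r) + (p + q + r) := by
  calc (c : WithTop ℤ) ≤ ((x + y + z : ℤ) : WithTop ℤ) := by exact_mod_cast hc
    _ = ((x : ℤ) : WithTop ℤ) + ((y : ℤ) : WithTop ℤ) + ((z : ℤ) : WithTop ℤ) := by
        push_cast; rfl
    _ ≤ (p + p) + (q + q) + (r + r) := add_le_add (add_le_add hx hy) hz
    _ = (p + q + r) + (p + q + r) := by abel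

lemma gcond_entry {n : ℕ} {a : Fin n → ℤ} {U : Matrix (Fin n) (Fin n) F}
    (hint : ∀ i j, v.Integer (U i j)) (hG : v.GCond a U) (l i : Fin n) :
    ((max 0 (a i - a l) : ℤ) : WithTop ℤ) ≤ v.ord (U l i) + v.ord (U l i) := by
  rcases lt_or_ge (a l) (a i) with h | h
  · have h1 := hG l i h
    have h2 : max 0 (a i - a l) = a i - a l := by omega
    rw [h2]; exact h1
  · have h2 : max 0 (a i - a l) = 0 := by omega
    rw [h2]
    exact_mod_cast add_nonneg (hint l i) (hint l i)

lemma memM_conj {n : ℕ} {a : Fin n → ℤ} {B U : Matrix (Fin n) (Fin n) F}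
    (hBM : v.MemM B a) (hBs : B.IsSymm) (hint : ∀ i j, v.Integer (U i j))
    (hG : v.GCond a U) : v.MemM (Uᵀ * B * U) a := by
  have hC : ∀ i j, (Uᵀ * B * U) i j = ∑ k : Fin n, ∑ l : Fin n, U l i * B l k * U k j := by
    intro i j
    simp [Matrix.mul_apply, Matrix.transpose_apply, Finset.sum_mul]
  constructor
  · -- diagonal condition
    intro i
    rw [hC i i, Finset.sum_comm, offdiag_decomp]
    refine le_of_double (c := a i) ?_
    refine v.double_ord_add ?_ ?_
    · -- sum of diagonal terms
      refine v.double_ord_sum _ _ fun l _ => ?_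
      have e1 : v.ord (U l i * B l l * U l i)
          = v.ord (U l i) + v.ord (B l l) + v.ord (U l i) := by
        rw [v.ord_mul, v.ord_mul]
      rw [e1]
      have hp := v.gcond_entry hint hG l i
      have hb : ((a l + a l : ℤ) : WithTop ℤ) ≤ v.ord (B l l) + v.ord (B l l) := by
        push_cast
        exact add_le_add (hBM.1 l) (hBM.1 l)
      exact coe3_le hp hb hp (by omega)
    · -- sum of paired off-diagonal terms
      refine v.double_ord_sum _ _ fun l _ => ?_
      refine v.double_ord_sum _ _ fun k _ => ?_
      split_ifs with hlk
      · have e0 : U l i * B l k * U k i + U k i * B k l * U l i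
            = 2 * B l k * (U l i * U k i) := by
          rw [hBs.apply k l]; ring
        rw [e0]
        have e1 : v.ord (2 * B l k * (U l i * U k i))
            = v.ord (2 * B l k) + v.ord (U l i) + v.ord (U k i) := by
          rw [v.ord_mul (2 * B l k) (U l i * U k i), v.ord_mul (U l i) (U k i), ← add_assoc]
        rw [e1]
        exact coe3_le (hBM.2 l k) (v.gcond_entry hint hG l i)
          (v.gcond_entry hint hG k i) (by omega)
      · simp [v.ord_zero]
  · -- off-diagonal condition
    intro i j
    have h2 : 2 * (Uᵀ * B * U) i j
        = ∑ k : Fin n, ∑ l : Fin n, U l i * (2 * B l k) * U k j := by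
      rw [hC i j, Finset.mul_sum]
      refine Finset.sum_congr rfl fun k _ => ?_
      rw [Finset.mul_sum]
      exact Finset.sum_congr rfl fun l _ => by ring
    rw [h2]
    refine v.double_ord_sum _ _ fun k _ => ?_
    refine v.double_ord_sum _ _ fun l _ => ?_
    have e1 : v.ord (U l i * (2 * B l k) * U k j)
        = v.ord (U l i) + v.ord (2 * B l k) + v.ord (U k j) := by
      rw [v.ord_mul, v.ord_mul]
    rw [e1]
    exact coe3_le (v.gcond_entry hint hG l i) (hBM.2 l k)
      (v.gcond_entry hint hG k j) (by omega)

end LocalFieldData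


section HardDirection

open Finset

variable {F : Type*} [Field F]

/-- The bilinear form `x ↦ xᵀ B y` associated with a matrix. -/
def gkBform {n : ℕ} (B : Matrix (Fin n) (Fin n) F) (x y : Fin n → F) : F :=
  dotProduct x (B.mulVec y)

lemma wt_half {d e : ℤ} {q : WithTop ℤ} (h : (d : WithTop ℤ) ≤ q + q)
    (he : ∀ s : ℤ, d ≤ s + s → e ≤ s) : (e : WithTop ℤ) ≤ q := by
  induction q using WithTop.recTopCoe with
  | top => exact le_top
  | coe s =>
      have hd : d ≤ s + s := by exact_mod_cast h
      exact_mod_cast he s hd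

lemma wt_dbl {d e : ℤ} {q : WithTop ℤ} (h : (d : WithTop ℤ) ≤ q + q)
    (he : ∀ s : ℤ, d ≤ s + s → e ≤ s + s) : (e : WithTop ℤ) ≤ q + q := by
  induction q using WithTop.recTopCoe with
  | top => simp
  | coe s =>
      have hd : d ≤ s + s := by exact_mod_cast h
      exact_mod_cast he s hd

lemma wt_double_le {c x : WithTop ℤ} (h : c + c ≤ x + x) : c ≤ x := by
  induction c using WithTop.recTopCoe with
  | top =>
      have hx : x + x = ⊤ := top_le_iff.mp (by simpa using h)
      rcases WithTop.add_eq_top.mp hx with h1 | h1 <;> simp [h1]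
  | coe c =>
      induction x using WithTop.recTopCoe with
      | top => exact le_top
      | coe x =>
          have h' : c + c ≤ x + x := by exact_mod_cast h
          exact_mod_cast (by linarith : c ≤ x)

lemma wt_succ_le {c : ℤ} {u : WithTop ℤ} (h1 : (c : WithTop ℤ) ≤ u)
    (h2 : u ≠ (c : WithTop ℤ)) : ((c + 1 : ℤ) : WithTop ℤ) ≤ u := by
  induction u using WithTop.recTopCoe with
  | top => exact le_top
  | coe u =>
      have h3 : c ≤ u := by exact_mod_cast h1
      have h4 : u ≠ c := by exact_mod_cast h2
      exact_mod_cast (by omega : c + 1 ≤ u)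

lemma bform_eq_sum {n : ℕ} (B : Matrix (Fin n) (Fin n) F) (x y : Fin n → F) :
    gkBform B x y = ∑ k : Fin n, ∑ l : Fin n, x k * B k l * y l := by
  simp [gkBform, dotProduct, Matrix.mulVec, Finset.mul_sum, mul_assoc]

lemma bform_symm {n : ℕ} {B : Matrix (Fin n) (Fin n) F} (hBs : B.IsSymm)
    (x y : Fin n → F) : gkBform B x y = gkBform B y x := by
  rw [bform_eq_sum, bform_eq_sum, Finset.sum_comm]
  refine Finset.sum_congr rfl fun l _ => Finset.sum_congr rfl fun k _ => ?_
  rw [hBs.apply k l]; ring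

lemma bform_single_right {n : ℕ} (B : Matrix (Fin n) (Fin n) F) (x : Fin n → F)
    (w : Fin n) : gkBform B x (Pi.single w 1) = ∑ k : Fin n, x k * B k w := by
  simp [gkBform, dotProduct]

lemma bform_single_single {n : ℕ} (B : Matrix (Fin n) (Fin n) F) (w w' : Fin n) :
    gkBform B (Pi.single w 1) (Pi.single w' 1) = B w w' := by
  rw [bform_single_right]
  simp [Pi.single_apply]

lemma sandwich_apply {n : ℕ} (T B : Matrix (Fin n) (Fin n) F) (i j : Fin n) :
    (Tᵀ * B * T) i j = gkBform B (fun k => T k i) (fun k => T k j) := by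
  have h1 : (Tᵀ * B * T) i j = ∑ l : Fin n, ∑ k : Fin n, T k i * B k l * T l j := by
    simp [Matrix.mul_apply, Matrix.transpose_apply, Finset.sum_mul]
  rw [h1, bform_eq_sum, Finset.sum_comm]

namespace LocalFieldData

variable (v : LocalFieldData F)

/-- The (doubled) weight of a vector with respect to the sequence `a`. -/
def dwgt {n : ℕ} (a : Fin n → ℤ) (x : Fin n → F) : WithTop ℤ :=
  Finset.univ.inf fun k => v.ord (x k) + v.ord (x k) + (a k : WithTop ℤ)

lemma dwgt_le {n : ℕ} (a : Fin n → ℤ) (x : Fin n → F) (k : Fin n) :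
    v.dwgt a x ≤ v.ord (x k) + v.ord (x k) + (a k : WithTop ℤ) :=
  Finset.inf_le (Finset.mem_univ k)

lemma le_dwgt {n : ℕ} {a : Fin n → ℤ} {x : Fin n → F} {c : WithTop ℤ}
    (h : ∀ k, c ≤ v.ord (x k) + v.ord (x k) + (a k : WithTop ℤ)) : c ≤ v.dwgt a x :=
  Finset.le_inf fun k _ => h k

lemma ord_sub_min (x y : F) : min (v.ord x) (v.ord y) ≤ v.ord (x - y) := by
  have h := v.ord_add x (-y)
  rw [v.ord_neg] at h
  simpa [sub_eq_add_neg] using h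

lemma ord_inv_coe {x : F} {s : ℤ} (h : v.ord x = (s : WithTop ℤ)) :
    v.ord x⁻¹ = ((-s : ℤ) : WithTop ℤ) := by
  have hx0 : x ≠ 0 := by
    intro h0; rw [h0, v.ord_zero] at h; exact absurd h (by simp)
  have hm := v.ord_mul x x⁻¹
  rw [mul_inv_cancel₀ hx0, v.ord_one, h] at hm
  have hne : v.ord x⁻¹ ≠ ⊤ := by
    intro htop; rw [htop] at hm; simp at hm
  obtain ⟨u, hu⟩ := WithTop.ne_top_iff_exists.mp hne
  rw [← hu] at hm ⊢
  have : (0 : ℤ) = s + u := by exact_mod_cast hm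
  have : u = -s := by omega
  rw [this]

lemma gkPair {n : ℕ} {a : Fin n → ℤ} {B : Matrix (Fin n) (Fin n) F}
    (hBM : v.MemM B a) (x y : Fin n → F) :
    v.dwgt a x + v.dwgt a y
      ≤ v.ord (2 * gkBform B x y) + v.ord (2 * gkBform B x y) := by
  have he : 2 * gkBform B x y = ∑ k : Fin n, ∑ l : Fin n, x k * (2 * B k l) * y l := by
    rw [bform_eq_sum, Finset.mul_sum]
    refine Finset.sum_congr rfl fun k _ => ?_
    rw [Finset.mul_sum]
    exact Finset.sum_congr rfl fun l _ => by ring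
  rw [he]
  refine v.double_ord_sum _ _ fun k _ => v.double_ord_sum _ _ fun l _ => ?_
  have e1 : v.ord (x k * (2 * B k l) * y l)
      = v.ord (x k) + v.ord (2 * B k l) + v.ord (y l) := by
    rw [v.ord_mul (x k * (2 * B k l)) (y l), v.ord_mul (x k) (2 * B k l)]
  rw [e1]
  calc v.dwgt a x + v.dwgt a y
      ≤ (v.ord (x k) + v.ord (x k) + (a k : WithTop ℤ))
        + (v.ord (y l) + v.ord (y l) + (a l : WithTop ℤ)) :=
        add_le_add (v.dwgt_le a x k) (v.dwgt_le a y l)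
    _ = (v.ord (x k) + v.ord (x k) + (v.ord (y l) + v.ord (y l)))
        + ((a k + a l : ℤ) : WithTop ℤ) := by push_cast; abel
    _ ≤ (v.ord (x k) + v.ord (x k) + (v.ord (y l) + v.ord (y l)))
        + (v.ord (2 * B k l) + v.ord (2 * B k l)) := add_le_add_right (hBM.2 k l) _
    _ = (v.ord (x k) + v.ord (2 * B k l) + v.ord (y l))
        + (v.ord (x k) + v.ord (2 * B k l) + v.ord (y l)) := by abel

lemma gkDiag {n : ℕ} {a : Fin n → ℤ} {B : Matrix (Fin n) (Fin n) F}
    (hBM : v.MemM B a) (hBs : B.IsSymm) (x : Fin n → F) :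
    v.dwgt a x ≤ v.ord (gkBform B x x) := by
  rw [bform_eq_sum, offdiag_decomp (fun k l => x k * B k l * x l)]
  refine wt_double_le ?_
  refine v.double_ord_add ?_ ?_
  · refine v.double_ord_sum _ _ fun k _ => ?_
    have e1 : v.ord (x k * B k k * x k)
        = v.ord (x k) + v.ord (B k k) + v.ord (x k) := by
      rw [v.ord_mul (x k * B k k) (x k), v.ord_mul (x k) (B k k)]
    rw [e1]
    calc v.dwgt a x + v.dwgt a x
        ≤ (v.ord (x k) + v.ord (x k) + (a k : WithTop ℤ))
          + (v.ord (x k) + v.ord (x k) + (a k : WithTop ℤ)) :=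
          add_le_add (v.dwgt_le a x k) (v.dwgt_le a x k)
      _ ≤ (v.ord (x k) + v.ord (x k) + v.ord (B k k))
          + (v.ord (x k) + v.ord (x k) + v.ord (B k k)) :=
          add_le_add (add_le_add_right (hBM.1 k) _) (add_le_add_right (hBM.1 k) _)
      _ = (v.ord (x k) + v.ord (B k k) + v.ord (x k))
          + (v.ord (x k) + v.ord (B k k) + v.ord (x k)) := by abel
  · refine v.double_ord_sum _ _ fun l _ => v.double_ord_sum _ _ fun k _ => ?_
    split_ifs with hlk
    · have e0 : x l * B l k * x k + x k * B k l * x l = 2 * B l k * (x l * x k) := by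
        rw [hBs.apply l k]; ring
      rw [e0]
      have e1 : v.ord (2 * B l k * (x l * x k))
          = v.ord (2 * B l k) + (v.ord (x l) + v.ord (x k)) := by
        rw [v.ord_mul (2 * B l k) (x l * x k), v.ord_mul (x l) (x k)]
      rw [e1]
      calc v.dwgt a x + v.dwgt a x
          ≤ (v.ord (x l) + v.ord (x l) + (a l : WithTop ℤ))
            + (v.ord (x k) + v.ord (x k) + (a k : WithTop ℤ)) :=
            add_le_add (v.dwgt_le a x l) (v.dwgt_le a x k)
        _ = ((a l + a k : ℤ) : WithTop ℤ)
            + (v.ord (x l) + v.ord (x l) + (v.ord (x k) + v.ord (x k))) := by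
            push_cast; abel
        _ ≤ (v.ord (2 * B l k) + v.ord (2 * B l k))
            + (v.ord (x l) + v.ord (x l) + (v.ord (x k) + v.ord (x k))) :=
            add_le_add_left (hBM.2 l k) _
        _ = (v.ord (2 * B l k) + (v.ord (x l) + v.ord (x k)))
            + (v.ord (2 * B l k) + (v.ord (x l) + v.ord (x k))) := by abel
    · simp [v.ord_zero]

lemma gkW4 {n : ℕ} {a : Fin n → ℤ} {B T T' : Matrix (Fin n) (Fin n) F}
    (hCM : v.MemM (Tᵀ * B * T) a) (hTT' : T * T' = 1) (j₀ w : Fin n) :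
    (a j₀ : WithTop ℤ) + v.dwgt a (fun k => T' k w)
      ≤ v.ord (2 * gkBform B (fun k => T k j₀) (Pi.single w 1))
        + v.ord (2 * gkBform B (fun k => T k j₀) (Pi.single w 1)) := by
  have key : 2 * gkBform B (fun k => T k j₀) (Pi.single w 1)
      = ∑ k : Fin n, 2 * (Tᵀ * B * T) j₀ k * T' k w := by
    rw [bform_single_right]
    have h1 : ∑ k : Fin n, T k j₀ * B k w = (Tᵀ * B) j₀ w := by
      simp [Matrix.mul_apply, Matrix.transpose_apply]
    rw [h1]
    have h2 : (Tᵀ * B) j₀ w = (Tᵀ * B * T * T') j₀ w := by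
      rw [Matrix.mul_assoc (Tᵀ * B) T T', hTT', Matrix.mul_one]
    rw [h2, Matrix.mul_apply, Finset.mul_sum]
    exact Finset.sum_congr rfl fun k _ => by ring
  rw [key]
  refine v.double_ord_sum _ _ fun k _ => ?_
  have e1 : v.ord (2 * (Tᵀ * B * T) j₀ k * T' k w)
      = v.ord (2 * (Tᵀ * B * T) j₀ k) + v.ord (T' k w) :=
    v.ord_mul (2 * (Tᵀ * B * T) j₀ k) (T' k w)
  rw [e1]
  calc (a j₀ : WithTop ℤ) + v.dwgt a (fun k => T' k w)
      ≤ (a j₀ : WithTop ℤ) + (v.ord (T' k w) + v.ord (T' k w) + (a k : WithTop ℤ)) :=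
        add_le_add_right (v.dwgt_le a (fun k => T' k w) k) _
    _ = ((a j₀ + a k : ℤ) : WithTop ℤ) + (v.ord (T' k w) + v.ord (T' k w)) := by
        push_cast; abel
    _ ≤ (v.ord (2 * (Tᵀ * B * T) j₀ k) + v.ord (2 * (Tᵀ * B * T) j₀ k))
        + (v.ord (T' k w) + v.ord (T' k w)) := add_le_add_left (hCM.2 j₀ k) _
    _ = (v.ord (2 * (Tᵀ * B * T) j₀ k) + v.ord (T' k w))
        + (v.ord (2 * (Tᵀ * B * T) j₀ k) + v.ord (T' k w)) := by abel

end LocalFieldData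

end HardDirection

namespace LocalFieldData

variable {F : Type*} [Field F] (v : LocalFieldData F)

lemma gkLemA {n : ℕ} {a : Fin n → ℤ} (hpos : ∀ i, 0 ≤ a i)
    (hmono : ∀ i j : Fin n, i ≤ j → a i ≤ a j)
    {B T T' : Matrix (Fin n) (Fin n) F} (hBs : B.IsSymm) (hBM : v.MemM B a)
    (hmax : ∀ b, v.MemSS B b → lexLE b a)
    (hTint : ∀ i j, v.Integer (T i j)) (hT'int : ∀ i j, v.Integer (T' i j))
    (hTT' : T * T' = 1) (hCM : v.MemM (Tᵀ * B * T) a)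
    {j₀ : Fin n} (hviol : v.dwgt a (fun k => T k j₀) < (a j₀ : WithTop ℤ))
    (hdual : ∀ w, (a w : WithTop ℤ) ≤ v.dwgt a (fun k => T' k w) ∨
      v.dwgt a (fun k => T k j₀) ≤ v.dwgt a (fun k => T' k w)) : False := by
  classical
  set x : Fin n → F := fun k => T k j₀ with hxdef
  -- extract the finite weight c'
  have hne : v.dwgt a x ≠ ⊤ := ne_top_of_lt hviol
  obtain ⟨c', hc'⟩ := WithTop.ne_top_iff_exists.mp hne
  have hcake : ∀ k, (c' : WithTop ℤ) ≤ v.ord (x k) + v.ord (x k) + (a k : WithTop ℤ) :=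
    fun k => hc' ▸ v.dwgt_le a x k
  -- the attaining index of maximal level
  have hunonempty : (Finset.univ : Finset (Fin n)).Nonempty := ⟨j₀, Finset.mem_univ _⟩
  obtain ⟨k₀, -, hk₀⟩ := Finset.exists_mem_eq_inf Finset.univ hunonempty
    (fun k => v.ord (x k) + v.ord (x k) + (a k : WithTop ℤ))
  have hk₀A : v.ord (x k₀) + v.ord (x k₀) + (a k₀ : WithTop ℤ) = (c' : WithTop ℤ) := by
    rw [← hk₀]; exact hc'.symm
  set A : Finset (Fin n) := Finset.univ.filter
    (fun k => v.ord (x k) + v.ord (x k) + (a k : WithTop ℤ) = (c' : WithTop ℤ)) with hAdef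
  have hk₀mem : k₀ ∈ A := Finset.mem_filter.mpr ⟨Finset.mem_univ _, hk₀A⟩
  obtain ⟨i₀, hi₀A, hi₀max⟩ := Finset.exists_max_image A a ⟨k₀, hk₀mem⟩
  have hi₀eq : v.ord (x i₀) + v.ord (x i₀) + (a i₀ : WithTop ℤ) = (c' : WithTop ℤ) :=
    (Finset.mem_filter.mp hi₀A).2
  set m : ℤ := a i₀ with hmdef
  -- extract t
  have hxi₀ne : v.ord (x i₀) ≠ ⊤ := by
    intro h; rw [h] at hi₀eq; simp at hi₀eq
  obtain ⟨t, ht⟩ := WithTop.ne_top_iff_exists.mp hxi₀ne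
  have hct : c' = t + t + m := by
    rw [← ht] at hi₀eq
    exact_mod_cast hi₀eq.symm
  have ht0 : 0 ≤ t := by
    have h0 := hTint i₀ j₀
    have : (0 : WithTop ℤ) ≤ v.ord (x i₀) := h0
    rw [← ht] at this
    exact_mod_cast this
  have haj₀ : c' + 1 ≤ a j₀ := by
    have h1 : (c' : WithTop ℤ) < (a j₀ : WithTop ℤ) := hc' ▸ hviol
    have h2 : c' < a j₀ := by exact_mod_cast h1
    omega
  -- strictness above level m
  have hyk : ∀ k, m < a k →
      ((c' + 1 : ℤ) : WithTop ℤ) ≤ v.ord (x k) + v.ord (x k) + (a k : WithTop ℤ) := by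
    intro k hk
    refine wt_succ_le (hcake k) ?_
    intro heq
    have hkA : k ∈ A := Finset.mem_filter.mpr ⟨Finset.mem_univ _, heq⟩
    exact absurd (hi₀max k hkA) (not_le.mpr hk)
  -- the scaling element
  obtain ⟨π, hπ⟩ := v.ord_surj t
  have hπne : π ≠ 0 := by
    intro h0; rw [h0, v.ord_zero] at hπ; exact absurd hπ (by simp)
  have hπinv : v.ord π⁻¹ = ((-t : ℤ) : WithTop ℤ) := v.ord_inv_coe hπ
  -- the splitting of x
  set y : Fin n → F := fun k => if a k ≤ m then 0 else x k with hydef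
  set z : Fin n → F := fun k => π⁻¹ * (x k - y k) with hzdef
  have hyval0 : ∀ k, a k ≤ m → y k = 0 := by
    intro k hk; simp only [hydef]; simp [hk]
  have hyval : ∀ k, ¬ a k ≤ m → y k = x k := by
    intro k hk; simp only [hydef]; simp [hk]
  have hlowx : ∀ k, a k ≤ m → x k - y k = x k := by
    intro k hk; rw [hyval0 k hk, sub_zero]
  have hlow0 : ∀ k, ¬ a k ≤ m → x k - y k = 0 := by
    intro k hk; rw [hyval k hk, sub_self]
  -- weight of y
  have hwy : ((c' + 1 : ℤ) : WithTop ℤ) ≤ v.dwgt a y := by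
    refine v.le_dwgt fun k => ?_
    by_cases hk : a k ≤ m
    · rw [hyval0 k hk, v.ord_zero]; simp
    · rw [hyval k hk]; exact hyk k (not_le.mp hk)
  have hwx : (c' : WithTop ℤ) ≤ v.dwgt a x := le_of_eq hc'
  -- z is integral
  have hzord : ∀ k, v.ord (z k) = ((-t : ℤ) : WithTop ℤ) + v.ord (x k - y k) := by
    intro k; simp only [hzdef]; rw [v.ord_mul, hπinv]
  have htle : ∀ k, a k ≤ m → ((t : ℤ) : WithTop ℤ) ≤ v.ord (x k) := by
    intro k hk
    have h5 : ((t + t + a k : ℤ) : WithTop ℤ) ≤ (c' : WithTop ℤ) := by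
      exact_mod_cast (by omega : t + t + a k ≤ c')
    have h6 := le_trans h5 (hcake k)
    rw [WithTop.coe_add] at h6
    have h7 : ((t + t : ℤ) : WithTop ℤ) ≤ v.ord (x k) + v.ord (x k) :=
      (WithTop.add_le_add_iff_right (WithTop.coe_ne_top)).mp h6
    refine wt_double_le ?_
    rw [WithTop.coe_add] at h7
    exact h7
  have hzint : ∀ k, v.Integer (z k) := by
    intro k
    show (0 : WithTop ℤ) ≤ v.ord (z k)
    rw [hzord k]
    by_cases hk : a k ≤ m
    · rw [hlowx k hk]
      have h1 := htle k hk
      calc (0 : WithTop ℤ) = ((-t : ℤ) : WithTop ℤ) + ((t : ℤ) : WithTop ℤ) := by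
            rw [← WithTop.coe_add]; norm_num
        _ ≤ ((-t : ℤ) : WithTop ℤ) + v.ord (x k) := add_le_add_right h1 _
    · rw [hlow0 k hk, v.ord_zero]
      exact le_top
  -- ord of z at i₀ is zero
  have hzi₀ : v.ord (z i₀) = 0 := by
    rw [hzord i₀, hlowx i₀ (le_refl m), ← ht, ← WithTop.coe_add]
    norm_num
  -- the index p : last index of level m
  set P : Finset (Fin n) := Finset.univ.filter (fun k => a k = m) with hPdef
  have hi₀P : i₀ ∈ P := Finset.mem_filter.mpr ⟨Finset.mem_univ _, rfl⟩
  have hPne : P.Nonempty := ⟨i₀, hi₀P⟩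
  set p : Fin n := P.max' hPne with hpdef
  have hpP : a p = m := (Finset.mem_filter.mp (P.max'_mem hPne)).2
  have hple : ∀ k, a k = m → k ≤ p := fun k hk =>
    P.le_max' k (Finset.mem_filter.mpr ⟨Finset.mem_univ _, hk⟩)
  have hi₀p : i₀ ≤ p := hple i₀ rfl
  have hup : ∀ k, p < k → m + 1 ≤ a k := by
    intro k hk
    have h1 : m ≤ a k := hpP ▸ hmono p k hk.le
    rcases eq_or_lt_of_le h1 with h2 | h2
    · exact absurd (hple k h2.symm) (not_le.mpr hk)
    · omega
  have hdown : ∀ k, k ≤ p → a k ≤ m := fun k hk => hpP ▸ hmono k p hk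
  -- the new sequence b
  set b : Fin n → ℤ := fun i => if i < p then a i else m + 1 with hbdef
  have hbp : b p = m + 1 := by rw [hbdef]; simp
  have hblt : ∀ i, i < p → b i = a i := by intro i hi; rw [hbdef]; simp [hi]
  -- the swap
  set σ : Equiv.Perm (Fin n) := Equiv.swap i₀ p with hσdef
  have hσi₀ : σ i₀ = p := Equiv.swap_apply_left i₀ p
  have hσp : σ p = i₀ := Equiv.swap_apply_right i₀ p
  have hσσ : ∀ k, σ (σ k) = k := fun k => Equiv.swap_apply_self i₀ p k
  have hbval : ∀ i, i ≠ p → b i ≤ a (σ i) ∧ b i ≤ m + 1 := by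
    intro i hip
    by_cases hii₀ : i = i₀
    · subst hii₀
      have hilt : i < p := lt_of_le_of_ne hi₀p hip
      rw [hblt i hilt, hσi₀, hpP]
      omega
    · have hσi : σ i = i := Equiv.swap_apply_of_ne_of_ne hii₀ hip
      rw [hσi]
      by_cases hilt : i < p
      · rw [hblt i hilt]
        have := hdown i hilt.le
        omega
      · have hpi : p < i := lt_of_le_of_ne (not_lt.mp hilt) (Ne.symm hip)
        have h1 := hup i hpi
        have hbi : b i = m + 1 := by rw [hbdef]; simp [hilt]
        rw [hbi]
        omega
  -- facts about x via the second form
  have hbxx : ((c' + 1 : ℤ) : WithTop ℤ) ≤ v.ord (gkBform B x x) := by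
    have h1 : (Tᵀ * B * T) j₀ j₀ = gkBform B x x := by
      rw [hxdef]; exact sandwich_apply T B j₀ j₀
    rw [← h1]
    calc ((c' + 1 : ℤ) : WithTop ℤ) ≤ ((a j₀ : ℤ) : WithTop ℤ) := by exact_mod_cast haj₀
      _ ≤ _ := hCM.1 j₀
  have hW4 : ∀ w, ((a j₀ : ℤ) : WithTop ℤ) + v.dwgt a (fun k => T' k w)
      ≤ v.ord (2 * gkBform B x (Pi.single w 1))
        + v.ord (2 * gkBform B x (Pi.single w 1)) := by
    intro w; rw [hxdef]; exact v.gkW4 hCM hTT' j₀ w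
  have hdualw : ∀ w, a w ≤ m → ((a w : ℤ) : WithTop ℤ) ≤ v.dwgt a (fun k => T' k w) := by
    intro w hw
    rcases hdual w with h | h
    · exact h
    · refine le_trans ?_ h
      rw [← hc']
      exact_mod_cast (by omega : a w ≤ c')
  have hsw : ∀ w : Fin n, ((a w : ℤ) : WithTop ℤ) ≤ v.dwgt a (Pi.single w 1) := by
    intro w
    refine v.le_dwgt fun k => ?_
    by_cases hk : k = w
    · subst hk; rw [Pi.single_eq_same, v.ord_one]; simp
    · rw [Pi.single_eq_of_ne hk, v.ord_zero]; simp
  -- E2 : pairings of z with standard basis vectors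
  have hE2 : ∀ (w : Fin n) (M0 : ℤ), M0 ≤ a w → M0 ≤ m + 1 →
      ((m + 1 + M0 : ℤ) : WithTop ℤ)
        ≤ v.ord (2 * gkBform B z (Pi.single w 1))
          + v.ord (2 * gkBform B z (Pi.single w 1)) := by
    intro w M0 hM1 hM2
    have hsplit : 2 * gkBform B z (Pi.single w 1)
        = π⁻¹ * (2 * gkBform B x (Pi.single w 1) - 2 * gkBform B y (Pi.single w 1)) := by
      rw [bform_single_right, bform_single_right, bform_single_right]
      rw [Finset.mul_sum, Finset.mul_sum, Finset.mul_sum, ← Finset.sum_sub_distrib,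
        Finset.mul_sum]
      refine Finset.sum_congr rfl fun k _ => ?_
      simp only [hzdef]
      ring
    have hxw : ((c' + 1 + M0 : ℤ) : WithTop ℤ)
        ≤ v.ord (2 * gkBform B x (Pi.single w 1))
          + v.ord (2 * gkBform B x (Pi.single w 1)) := by
      by_cases hwm : a w ≤ m
      · refine le_trans ?_ (hW4 w)
        calc ((c' + 1 + M0 : ℤ) : WithTop ℤ)
            ≤ ((a j₀ + a w : ℤ) : WithTop ℤ) := by
              exact_mod_cast (by omega : c' + 1 + M0 ≤ a j₀ + a w)
          _ = ((a j₀ : ℤ) : WithTop ℤ) + ((a w : ℤ) : WithTop ℤ) := WithTop.coe_add _ _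
          _ ≤ ((a j₀ : ℤ) : WithTop ℤ) + v.dwgt a (fun k => T' k w) :=
              add_le_add_right (hdualw w hwm) _
      · have h1 := v.gkPair hBM x (Pi.single w 1)
        have h2 : ((c' + a w : ℤ) : WithTop ℤ)
            ≤ v.ord (2 * gkBform B x (Pi.single w 1))
              + v.ord (2 * gkBform B x (Pi.single w 1)) := by
          refine le_trans ?_ h1
          rw [WithTop.coe_add]
          exact add_le_add hwx (hsw w)
        have hwm' : m + 1 ≤ a w := by omega
        exact wt_dbl h2 (fun s hs => by omega)
    have hyw : ((c' + 1 + M0 : ℤ) : WithTop ℤ)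
        ≤ v.ord (2 * gkBform B y (Pi.single w 1))
          + v.ord (2 * gkBform B y (Pi.single w 1)) := by
      refine le_trans ?_ (v.gkPair hBM y (Pi.single w 1))
      calc ((c' + 1 + M0 : ℤ) : WithTop ℤ)
          ≤ ((c' + 1 + a w : ℤ) : WithTop ℤ) := by
            exact_mod_cast (by omega : c' + 1 + M0 ≤ c' + 1 + a w)
        _ = ((c' + 1 : ℤ) : WithTop ℤ) + ((a w : ℤ) : WithTop ℤ) := WithTop.coe_add _ _
        _ ≤ v.dwgt a y + v.dwgt a (Pi.single w 1) := add_le_add hwy (hsw w)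
    rw [hsplit, v.ord_mul, hπinv]
    have hDD : ((c' + 1 + M0 : ℤ) : WithTop ℤ)
        ≤ v.ord (2 * gkBform B x (Pi.single w 1) - 2 * gkBform B y (Pi.single w 1))
          + v.ord (2 * gkBform B x (Pi.single w 1) - 2 * gkBform B y (Pi.single w 1)) :=
      le_trans (double_min hxw hyw) (add_le_add (v.ord_sub_min _ _) (v.ord_sub_min _ _))
    calc ((m + 1 + M0 : ℤ) : WithTop ℤ)
        = ((-t : ℤ) : WithTop ℤ) + ((-t : ℤ) : WithTop ℤ)
            + ((c' + 1 + M0 : ℤ) : WithTop ℤ) := by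
          rw [← WithTop.coe_add, ← WithTop.coe_add]
          exact_mod_cast (by omega : m + 1 + M0 = -t + -t + (c' + 1 + M0))
      _ ≤ ((-t : ℤ) : WithTop ℤ) + ((-t : ℤ) : WithTop ℤ)
            + (v.ord (2 * gkBform B x (Pi.single w 1) - 2 * gkBform B y (Pi.single w 1))
              + v.ord (2 * gkBform B x (Pi.single w 1) - 2 * gkBform B y (Pi.single w 1))) :=
          add_le_add_right hDD _
      _ = (((-t : ℤ) : WithTop ℤ)
              + v.ord (2 * gkBform B x (Pi.single w 1) - 2 * gkBform B y (Pi.single w 1)))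
            + (((-t : ℤ) : WithTop ℤ)
              + v.ord (2 * gkBform B x (Pi.single w 1) - 2 * gkBform B y (Pi.single w 1))) := by
          abel
  -- E1 : the diagonal value of z
  have hE1 : ((m + 1 : ℤ) : WithTop ℤ) ≤ v.ord (gkBform B z z) := by
    have hzz : gkBform B z z = π⁻¹ * π⁻¹ * gkBform B (x - y) (x - y) := by
      rw [bform_eq_sum, bform_eq_sum, Finset.mul_sum]
      refine Finset.sum_congr rfl fun k _ => ?_
      rw [Finset.mul_sum]
      refine Finset.sum_congr rfl fun l _ => ?_
      simp only [hzdef, Pi.sub_apply]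
      ring
    have hlow : gkBform B (x - y) (x - y)
        = gkBform B x x - (gkBform B x y + gkBform B y x) + gkBform B y y := by
      simp only [gkBform, Matrix.mulVec_sub, dotProduct_sub, sub_dotProduct]
      ring
    have hpolar : ((c' + 1 : ℤ) : WithTop ℤ)
        ≤ v.ord (gkBform B x y + gkBform B y x) := by
      have hsymm : gkBform B y x = gkBform B x y := bform_symm hBs y x
      rw [hsymm, ← two_mul]
      have h3 : ((c' + (c' + 1) : ℤ) : WithTop ℤ)
          ≤ v.ord (2 * gkBform B x y) + v.ord (2 * gkBform B x y) := by
        refine le_trans ?_ (v.gkPair hBM x y)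
        rw [WithTop.coe_add]
        exact add_le_add hwx hwy
      exact wt_half h3 (fun s hs => by omega)
    have hbyy : ((c' + 1 : ℤ) : WithTop ℤ) ≤ v.ord (gkBform B y y) :=
      le_trans hwy (v.gkDiag hBM hBs y)
    have hll : ((c' + 1 : ℤ) : WithTop ℤ) ≤ v.ord (gkBform B (x - y) (x - y)) := by
      rw [hlow]
      exact le_trans (le_min (le_min hbxx hpolar) hbyy)
        (le_trans (min_le_min (v.ord_sub_min _ _) (le_refl _)) (v.ord_add _ _))
    rw [hzz, v.ord_mul (π⁻¹ * π⁻¹) (gkBform B (x - y) (x - y)), v.ord_mul π⁻¹ π⁻¹, hπinv]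
    calc ((m + 1 : ℤ) : WithTop ℤ)
        = ((-t : ℤ) : WithTop ℤ) + ((-t : ℤ) : WithTop ℤ) + ((c' + 1 : ℤ) : WithTop ℤ) := by
          rw [← WithTop.coe_add, ← WithTop.coe_add]
          exact_mod_cast (by omega : m + 1 = -t + -t + (c' + 1))
      _ ≤ ((-t : ℤ) : WithTop ℤ) + ((-t : ℤ) : WithTop ℤ)
            + v.ord (gkBform B (x - y) (x - y)) := add_le_add_right hll _
  -- the new basis matrix V
  set V : Matrix (Fin n) (Fin n) F :=
    (fun k i => if i = p then z k else if k = σ i then (1 : F) else 0 :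
      Matrix (Fin n) (Fin n) F) with hVdef
  have hVapp : ∀ k i, V k i = if i = p then z k else if k = σ i then (1 : F) else 0 :=
    fun k i => rfl
  have hVcolp : (fun k => V k p) = z := by
    funext k; rw [hVapp k p]; simp
  have hVcol : ∀ i, i ≠ p → (fun k => V k i) = Pi.single (σ i) (1 : F) := by
    intro i hip; funext k
    rw [hVapp k i, Pi.single_apply]
    simp [hip]
  -- entries of V are integral
  have hVint : ∀ k i, v.Integer (V k i) := by
    intro k i
    rw [hVapp k i]
    split_ifs with h1 h2
    · exact hzint k
    · exact v.integer_one
    · exact v.integer_zero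
  -- determinant of V
  set M : Matrix (Fin n) (Fin n) F :=
    (1 : Matrix (Fin n) (Fin n) F).updateCol p (fun k => z (σ k)) with hMdef
  have hperm : ∀ k l : Fin n, (σ.permMatrix F) k l = if σ k = l then 1 else 0 := by
    intro k l
    simp [Equiv.Perm.permMatrix, PEquiv.toMatrix_apply, Equiv.toPEquiv_apply,
      Option.mem_def, eq_comm]
  have hswap_iff : ∀ k l : Fin n, (k = σ l) ↔ (σ k = l) := by
    intro k l
    constructor
    · rintro rfl; exact hσσ l
    · rintro rfl; exact (hσσ k).symm
  have hVfact : V = (σ.permMatrix F) * M := by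
    ext k i
    rw [Matrix.mul_apply]
    have hsum : ∀ w : Fin n → F, (∑ l, (σ.permMatrix F) k l * w l) = w (σ k) := by
      intro w
      have h0 : ∀ l, (σ.permMatrix F) k l * w l = if σ k = l then w l else 0 := by
        intro l; rw [hperm k l]; split <;> simp
      simp only [h0]
      rw [Finset.sum_ite_eq Finset.univ (σ k) w]
      simp
    by_cases hip : i = p
    · subst hip
      have hM : ∀ l, M l p = z (σ l) := fun l => by
        rw [hMdef]; simp [Matrix.updateCol_apply]
      simp only [hM]
      rw [hsum (fun l => z (σ l)), hσσ k, hVapp k p]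
      simp
    · have hM : ∀ l, M l i = (1 : Matrix (Fin n) (Fin n) F) l i := fun l => by
        rw [hMdef]; simp [Matrix.updateCol_apply, hip]
      simp only [hM]
      rw [hsum (fun l => (1 : Matrix (Fin n) (Fin n) F) l i), hVapp k i, Matrix.one_apply]
      simp only [hip, if_false]
      by_cases hk : k = σ i
      · simp [hk, hσσ]
      · have hk2 : ¬ σ k = i := fun h => hk ((hswap_iff k i).mpr h)
        simp [hk, hk2]
  have hdetV : v.ord V.det = 0 := by
    rw [hVfact, Matrix.det_mul, Matrix.det_permutation]
    have hdM : M.det = z i₀ := by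
      rw [hMdef, ← Matrix.cramer_apply, Matrix.cramer_one]
      simp [hσp]
    rw [hdM, v.ord_mul]
    have h1 : v.ord ((Equiv.Perm.sign σ : ℤ) : F) = 0 := by
      rcases Int.units_eq_one_or (Equiv.Perm.sign σ) with hs | hs <;> rw [hs]
      · simp [v.ord_one]
      · simp only [Units.val_neg, Units.val_one, Int.cast_neg, Int.cast_one]
        rw [v.ord_neg, v.ord_one]
    rw [h1, hzi₀, add_zero]
  have hVuni : v.IsUnimodular V := ⟨hVint, hdetV⟩
  -- the transformed matrix satisfies MemM b
  have hVs : ∀ i j, (Vᵀ * B * V) i j = gkBform B (fun k => V k i) (fun k => V k j) :=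
    fun i j => sandwich_apply V B i j
  have h2ord : (0 : WithTop ℤ) ≤ v.ord (2 : F) := by
    rw [show (2 : F) = 1 + 1 by norm_num]
    exact v.integer_add v.integer_one v.integer_one
  have hMM : v.MemM (Vᵀ * B * V) b := by
    constructor
    · intro i
      rw [hVs i i]
      by_cases hip : i = p
      · subst hip
        rw [hVcolp, hbp]
        exact hE1
      · rw [hVcol i hip, bform_single_single]
        have h1 := (hbval i hip).1
        calc ((b i : ℤ) : WithTop ℤ) ≤ ((a (σ i) : ℤ) : WithTop ℤ) := by exact_mod_cast h1
          _ ≤ _ := hBM.1 (σ i)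
    · intro i j
      rw [hVs i j]
      by_cases hip : i = p <;> by_cases hjp : j = p
      · subst hip; subst hjp
        rw [hVcolp, hbp]
        rw [v.ord_mul 2 (gkBform B z z)]
        have h1 : ((m + 1 : ℤ) : WithTop ℤ) ≤ v.ord 2 + v.ord (gkBform B z z) :=
          le_trans (le_of_eq (zero_add _).symm) (add_le_add h2ord hE1)
        calc ((m + 1 + (m + 1) : ℤ) : WithTop ℤ)
            = ((m + 1 : ℤ) : WithTop ℤ) + ((m + 1 : ℤ) : WithTop ℤ) := WithTop.coe_add _ _
          _ ≤ _ := add_le_add h1 h1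
      · subst hip
        rw [hVcolp, hVcol j hjp]
        obtain ⟨hj1, hj2⟩ := hbval j hjp
        have h3 := hE2 (σ j) (b j) hj1 hj2
        have hcoe : ((b p + b j : ℤ) : WithTop ℤ) = ((m + 1 + b j : ℤ) : WithTop ℤ) := by
          rw [hbp]
        rw [hcoe]
        exact h3
      · subst hjp
        rw [hVcolp, hVcol i hip]
        obtain ⟨hi1, hi2⟩ := hbval i hip
        have h3 := hE2 (σ i) (b i) hi1 hi2
        have hflip : gkBform B (Pi.single (σ i) (1 : F)) z
            = gkBform B z (Pi.single (σ i) (1 : F)) := bform_symm hBs _ _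
        rw [hflip]
        have hcoe : ((b i + b p : ℤ) : WithTop ℤ) = ((m + 1 + b i : ℤ) : WithTop ℤ) := by
          rw [hbp]; exact_mod_cast (by omega : b i + (m + 1) = m + 1 + b i)
        rw [hcoe]
        exact h3
      · rw [hVcol i hip, hVcol j hjp, bform_single_single]
        obtain ⟨hi1, -⟩ := hbval i hip
        obtain ⟨hj1, -⟩ := hbval j hjp
        calc ((b i + b j : ℤ) : WithTop ℤ)
            ≤ ((a (σ i) + a (σ j) : ℤ) : WithTop ℤ) := by
              exact_mod_cast (by omega : b i + b j ≤ a (σ i) + a (σ j))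
          _ ≤ _ := hBM.2 (σ i) (σ j)
  -- b is a valid non-decreasing non-negative sequence
  have hbpos : ∀ i, 0 ≤ b i := by
    intro i
    simp only [hbdef]
    split_ifs
    · exact hpos i
    · have := hpos i₀; omega
  have hbmono : ∀ i j : Fin n, i ≤ j → b i ≤ b j := by
    intro i j hij
    simp only [hbdef]
    split_ifs with hi hj hj
    · exact hmono i j hij
    · have := hdown i hi.le; omega
    · exact absurd (lt_of_le_of_lt hij hj) hi
    · exact le_refl _
  -- contradiction with the maximality of a
  have hSS : v.MemSS B b := ⟨V, hVuni, hbpos, hbmono, hMM⟩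
  have hlex := hmax b hSS
  rcases hlex with heq | ⟨q, hq, hq'⟩
  · have h4 := congrFun heq p
    rw [hbp, hpP] at h4
    omega
  · rcases lt_trichotomy q p with h | h | h
    · rw [hblt q h] at hq
      exact absurd hq (lt_irrefl _)
    · subst h
      rw [hbp, hpP] at hq
      omega
    · have h4 := hq' p h
      rw [hbp, hpP] at h4
      omega

end LocalFieldData

/-- The hard direction of Theorem 1.2: if `B` is optimal with `GK(B) = a` and
`B[U] ∈ S(a)`, then `U ∈ G_a`. -/
lemma LocalFieldData.gcond_of_memS {F : Type*} [Field F] [CharZero F]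
    (v : LocalFieldData F) {n : ℕ}
    {B : Matrix (Fin n) (Fin n) F} (hB : v.IsHalfIntegral B) (hnd : B.det ≠ 0)
    {a : Fin n → ℤ} (hGK : v.IsGK B a) (hopt : v.MemS B a)
    {U : Matrix (Fin n) (Fin n) F} (hU : v.IsUnimodular U)
    (hS : v.MemS (Uᵀ * B * U) a) : v.GCond a U := by
  classical
  by_contra hG
  unfold LocalFieldData.GCond at hG
  push_neg at hG
  obtain ⟨i, j, hij, hord⟩ := hG
  have hdet : IsUnit U.det := isUnit_iff_ne_zero.2 (v.det_ne_zero_of_unimodular hU)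
  have hUU : U * U⁻¹ = 1 := Matrix.mul_nonsing_inv U hdet
  have hUU' : U⁻¹ * U = 1 := Matrix.nonsing_inv_mul U hdet
  have hUi := v.unimodular_inv hU
  have hBs : B.IsSymm := hB.1
  have hCs : (Uᵀ * B * U).IsSymm := by
    show (Uᵀ * B * U)ᵀ = Uᵀ * B * U
    rw [Matrix.transpose_mul, Matrix.transpose_mul, Matrix.transpose_transpose, hBs.eq,
      ← Matrix.mul_assoc]
  have hmaxB : ∀ b, v.MemSS B b → lexLE b a := hGK.2
  have hmaxC : ∀ b, v.MemSS (Uᵀ * B * U) b → lexLE b a := fun b hb =>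
    hGK.2 b ((v.memSS_conj hU b).1 hb)
  have hBMM := hopt.2.2
  have hCMM := hS.2.2
  have hBMM' : v.MemM ((U⁻¹)ᵀ * (Uᵀ * B * U) * U⁻¹) a := by
    rw [v.conj_inv_conj hU]; exact hBMM
  set f : Bool × Fin n → WithTop ℤ := fun s =>
    if s.1 then v.dwgt a (fun k => U k s.2) else v.dwgt a (fun k => U⁻¹ k s.2) with hfdef
  set Vio : Finset (Bool × Fin n) :=
    Finset.univ.filter (fun s => f s < ((a s.2 : ℤ) : WithTop ℤ)) with hViodef
  have hjvio : (true, j) ∈ Vio := by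
    refine Finset.mem_filter.mpr ⟨Finset.mem_univ _, ?_⟩
    have hf : f (true, j) = v.dwgt a (fun k => U k j) := by simp [hfdef]
    rw [hf]
    refine lt_of_le_of_lt (v.dwgt_le a (fun k => U k j) i) ?_
    have h3 : v.ord (U i j) + v.ord (U i j) < ((a j - a i : ℤ) : WithTop ℤ) := hord
    have h4 : v.ord (U i j) + v.ord (U i j) + ((a i : ℤ) : WithTop ℤ)
        < ((a j - a i : ℤ) : WithTop ℤ) + ((a i : ℤ) : WithTop ℤ) :=
      WithTop.add_lt_add_right WithTop.coe_ne_top h3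
    rw [← WithTop.coe_add] at h4
    have h5 : ((a j - a i + a i : ℤ) : WithTop ℤ) = ((a j : ℤ) : WithTop ℤ) := by
      exact_mod_cast (by ring : a j - a i + a i = a j)
    rw [h5] at h4
    exact h4
  obtain ⟨s₀, hs₀mem, hs₀min⟩ := Finset.exists_min_image Vio f ⟨(true, j), hjvio⟩
  have hs₀v : f s₀ < ((a s₀.2 : ℤ) : WithTop ℤ) := (Finset.mem_filter.mp hs₀mem).2
  obtain ⟨side, j₀⟩ := s₀
  cases side
  · -- the minimal violation comes from `U⁻¹` : use the form `UᵀBU` as base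
    have hf : f (false, j₀) = v.dwgt a (fun k => U⁻¹ k j₀) := by simp [hfdef]
    have hviol : v.dwgt a (fun k => U⁻¹ k j₀) < ((a j₀ : ℤ) : WithTop ℤ) := by
      rw [← hf]; exact hs₀v
    refine v.gkLemA hopt.1 hopt.2.1 hCs hCMM hmaxC hUi.1 hU.1 hUU' hBMM' hviol ?_
    intro w
    by_cases hw : ((a w : ℤ) : WithTop ℤ) ≤ v.dwgt a (fun k => U k w)
    · exact Or.inl hw
    · right
      have hmem : (true, w) ∈ Vio := by
        refine Finset.mem_filter.mpr ⟨Finset.mem_univ _, ?_⟩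
        have hf2 : f (true, w) = v.dwgt a (fun k => U k w) := by simp [hfdef]
        rw [hf2]
        exact not_le.mp hw
      have h6 := hs₀min (true, w) hmem
      rw [hf] at h6
      have hf2 : f (true, w) = v.dwgt a (fun k => U k w) := by simp [hfdef]
      rw [hf2] at h6
      exact h6
  · -- the minimal violation comes from `U` : use the base form `B`
    have hf : f (true, j₀) = v.dwgt a (fun k => U k j₀) := by simp [hfdef]
    have hviol : v.dwgt a (fun k => U k j₀) < ((a j₀ : ℤ) : WithTop ℤ) := by
      rw [← hf]; exact hs₀v
    refine v.gkLemA hopt.1 hopt.2.1 hBs hBMM hmaxB hU.1 hUi.1 hUU hCMM hviol ?_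
    intro w
    by_cases hw : ((a w : ℤ) : WithTop ℤ) ≤ v.dwgt a (fun k => U⁻¹ k w)
    · exact Or.inl hw
    · right
      have hmem : (false, w) ∈ Vio := by
        refine Finset.mem_filter.mpr ⟨Finset.mem_univ _, ?_⟩
        have hf2 : f (false, w) = v.dwgt a (fun k => U⁻¹ k w) := by simp [hfdef]
        rw [hf2]
        exact not_le.mp hw
      have h6 := hs₀min (false, w) hmem
      rw [hf] at h6
      have hf2 : f (false, w) = v.dwgt a (fun k => U⁻¹ k w) := by simp [hfdef]
      rw [hf2] at h6
      exact h6


/-- **Theorem 1.2.** Suppose `B ∈ ℋ_n(𝔬)^nd` is optimal with `GK(B) = a`, and let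
`U ∈ GL_n(𝔬)`. Then `B[U]` is optimal if and only if `U ∈ G_a`. -/
theorem optimal_transform_iff_mem_G {F : Type*} [Field F] [CharZero F] (v : LocalFieldData F) {n : ℕ}
    (B : Matrix (Fin n) (Fin n) F) (hB : v.IsHalfIntegral B) (hnd : B.det ≠ 0)
    (a : Fin n → ℤ) (hGK : v.IsGK B a) (hopt : v.MemS B a)
    (U : Matrix (Fin n) (Fin n) F) (hU : v.IsUnimodular U) :
    v.IsOptimal (Uᵀ * B * U) ↔ v.GCond a U := by
  constructor
  · rintro ⟨a', hGK', hS'⟩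
    have h1 : v.MemSS B a' := (v.memSS_conj hU a').1 hGK'.1
    have h2 : v.MemSS (Uᵀ * B * U) a := (v.memSS_conj hU a).2 hGK.1
    have e : a' = a := lexLE_antisymm (hGK.2 a' h1) (hGK'.2 a h2)
    rw [e] at hS'
    exact v.gcond_of_memS hB hnd hGK hopt hU hS'
  · intro hG
    have hM : v.MemS (Uᵀ * B * U) a :=
      ⟨hopt.1, hopt.2.1, v.memM_conj hopt.2.2 hB.1 hU.1 hG⟩
    refine ⟨a, ⟨(v.memSS_conj hU a).2 hGK.1, fun b hb => hGK.2 b ((v.memSS_conj hU b).1 hb)⟩, hM⟩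

end
end

section
/- Assume F is dyadic and let B = (b_{ij}) ∈ ℋ_n(𝔬)^{nd} be a reduced form of GK-type (a, σ). Then: (1) if n = deg B is odd and i₀ ∈ 𝒫⁰(σ), then ord(b_{i₀,i₀}) ≡ ord(det B) (mod 2); (2) if n = deg B is even and ξ_B = 0, then for every integer k there exists i₀ ∈ 𝒫⁰(σ) with ord(b_{i₀,i₀}) ≡ k (mod 2). -/
open Matrix
open scoped Classical

noncomputable section

/-! ### Auxiliary valuation lemmas -/

section AuxOrd

variable {F : Type*} [Field F] (v : LocalFieldData F)

lemma aux_ord_ne_top {x : F} (hx : x ≠ 0) : v.ord x ≠ ⊤ :=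
  fun h => hx (v.ord_eq_top x h)

lemma aux_exists_int {x : F} (hx : x ≠ 0) : ∃ m : ℤ, v.ord x = (m : WithTop ℤ) := by
  rcases hm : v.ord x with _ | m
  · exact absurd hm (aux_ord_ne_top v hx)
  · exact ⟨m, rfl⟩

lemma aux_ne_zero_of_ord {x : F} {m : ℤ} (h : v.ord x = (m : WithTop ℤ)) : x ≠ 0 := by
  intro h0
  rw [h0, v.ord_zero] at h
  exact (WithTop.top_ne_coe) h

lemma aux_le_ord_add {c : WithTop ℤ} {x y : F} (hx : c ≤ v.ord x) (hy : c ≤ v.ord y) :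
    c ≤ v.ord (x + y) := le_trans (le_min hx hy) (v.ord_add x y)

lemma aux_le_ord_sub {c : WithTop ℤ} {x y : F} (hx : c ≤ v.ord x) (hy : c ≤ v.ord y) :
    c ≤ v.ord (x - y) := by
  rw [sub_eq_add_neg]
  exact aux_le_ord_add v hx (by rwa [v.ord_neg])

lemma aux_lt_ord_add {c : WithTop ℤ} {x y : F} (hx : c < v.ord x) (hy : c < v.ord y) :
    c < v.ord (x + y) := lt_of_lt_of_le (lt_min hx hy) (v.ord_add x y)

lemma aux_ord_add_eq_left {x y : F} (h : v.ord x < v.ord y) : v.ord (x + y) = v.ord x := by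
  refine le_antisymm ?_ (le_trans (le_min le_rfl h.le) (v.ord_add x y))
  by_contra hlt
  push_neg at hlt
  have hxy : (x + y) + (-y) = x := by ring
  have : v.ord x < v.ord x := by
    conv_rhs => rw [← hxy]
    exact lt_of_lt_of_le (lt_min hlt (by rw [v.ord_neg]; exact h)) (v.ord_add _ _)
  exact absurd this (lt_irrefl _)

lemma aux_ord_sub_eq_right {x y : F} (h : v.ord y < v.ord x) : v.ord (x - y) = v.ord y := by
  have := aux_ord_add_eq_left v (x := -y) (y := x) (by rwa [v.ord_neg])
  rw [neg_add_eq_sub] at this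
  rw [this, v.ord_neg]

lemma aux_ord_one : v.ord (1 : F) = 0 := v.ord_one

lemma aux_ord_inv {x : F} {m : ℤ} (h : v.ord x = (m : WithTop ℤ)) :
    v.ord x⁻¹ = ((-m : ℤ) : WithTop ℤ) := by
  have hx0 : x ≠ 0 := aux_ne_zero_of_ord v h
  have hmul := v.ord_mul x x⁻¹
  rw [mul_inv_cancel₀ hx0, v.ord_one, h] at hmul
  rcases aux_exists_int v (inv_ne_zero hx0) with ⟨k, hk⟩
  rw [hk] at hmul ⊢
  have : (0 : ℤ) = m + k := by exact_mod_cast hmul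
  norm_cast
  omega

lemma aux_eq_zero_of_ord_all {x : F} (h : ∀ N : ℤ, (N : WithTop ℤ) ≤ v.ord x) : x = 0 := by
  by_contra hx
  rcases aux_exists_int v hx with ⟨m, hm⟩
  have := h (m + 1)
  rw [hm] at this
  have : m + 1 ≤ m := by exact_mod_cast this
  omega

lemma aux_ordZ_eq {x : F} {m : ℤ} (h : v.ord x = (m : WithTop ℤ)) : v.ordZ x = m := by
  simp [LocalFieldData.ordZ, h]

end AuxOrd

/-! ### WithTop ℤ helpers -/

section AuxWT

lemma wt_add_one_le {m : ℤ} {z : WithTop ℤ} (h : (m : WithTop ℤ) < z) :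
    ((m + 1 : ℤ) : WithTop ℤ) ≤ z := by
  induction z using WithTop.recTopCoe with
  | top => exact le_top
  | coe k =>
    have : m < k := by exact_mod_cast h
    exact_mod_cast this

lemma wt_half_le {m : ℤ} {z : WithTop ℤ} (h : ((2 * m : ℤ) : WithTop ℤ) ≤ z + z) :
    (m : WithTop ℤ) ≤ z := by
  induction z using WithTop.recTopCoe with
  | top => exact le_top
  | coe k =>
    have h2 : 2 * m ≤ k + k := by exact_mod_cast h
    have : m ≤ k := by omega
    exact_mod_cast this

lemma wt_half_le' {m : ℤ} {z : WithTop ℤ} (h : ((2 * m + 2 : ℤ) : WithTop ℤ) ≤ z + z) :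
    ((m + 1 : ℤ) : WithTop ℤ) ≤ z := by
  have : ((2 * (m + 1) : ℤ) : WithTop ℤ) ≤ z + z := by
    convert h using 2
    ring
  exact wt_half_le this

lemma wt_half_eq {m : ℤ} {z : WithTop ℤ} (h : z + z = ((2 * m : ℤ) : WithTop ℤ)) :
    z = (m : WithTop ℤ) := by
  induction z using WithTop.recTopCoe with
  | top => exact absurd h (by simp; exact fun hh => absurd hh.symm (by exact_mod_cast WithTop.coe_ne_top))
  | coe k =>
    have h2 : k + k = 2 * m := by exact_mod_cast h
    have : k = m := by omega
    exact_mod_cast this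

lemma wt_cancel_coe {m k : ℤ} {z : WithTop ℤ} (h : (m : WithTop ℤ) + z = (k : WithTop ℤ)) :
    z = ((k - m : ℤ) : WithTop ℤ) := by
  induction z using WithTop.recTopCoe with
  | top => simp at h
  | coe t =>
    have h2 : m + t = k := by exact_mod_cast h
    have : t = k - m := by omega
    exact_mod_cast this

lemma wt_shift_sub {m c : ℤ} {z : WithTop ℤ} (h : (c : WithTop ℤ) ≤ (m : WithTop ℤ) + z) :
    ((c - m : ℤ) : WithTop ℤ) ≤ z := by
  induction z using WithTop.recTopCoe with
  | top => exact le_top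
  | coe t =>
    have h2 : c ≤ m + t := by exact_mod_cast h
    have : c - m ≤ t := by omega
    exact_mod_cast this

end AuxWT

section AuxDbl

variable {F : Type*} [Field F] (v : LocalFieldData F)

lemma aux_dbl_add {c : ℤ} {x y : F}
    (hx : (c : WithTop ℤ) ≤ v.ord x + v.ord x) (hy : (c : WithTop ℤ) ≤ v.ord y + v.ord y) :
    (c : WithTop ℤ) ≤ v.ord (x + y) + v.ord (x + y) := by
  have hm' : min (v.ord x) (v.ord y) ≤ v.ord (x + y) := v.ord_add x y
  have hmin : (c : WithTop ℤ) ≤ min (v.ord x) (v.ord y) + min (v.ord x) (v.ord y) := by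
    rcases le_total (v.ord x) (v.ord y) with h | h
    · rwa [min_eq_left h]
    · rwa [min_eq_right h]
  exact le_trans hmin (add_le_add hm' hm')

lemma aux_dbl_neg {c : ℤ} {x : F} (hx : (c : WithTop ℤ) ≤ v.ord x + v.ord x) :
    (c : WithTop ℤ) ≤ v.ord (-x) + v.ord (-x) := by rwa [v.ord_neg]

lemma aux_dbl_sub {c : ℤ} {x y : F}
    (hx : (c : WithTop ℤ) ≤ v.ord x + v.ord x) (hy : (c : WithTop ℤ) ≤ v.ord y + v.ord y) :
    (c : WithTop ℤ) ≤ v.ord (x - y) + v.ord (x - y) := by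
  rw [sub_eq_add_neg]
  exact aux_dbl_add v hx (aux_dbl_neg v hy)

lemma aux_dbl_mul3 {f1 f2 f3 : F} {c1 c2 c3 t : ℤ}
    (h1 : (c1 : WithTop ℤ) ≤ v.ord f1 + v.ord f1)
    (h2 : (c2 : WithTop ℤ) ≤ v.ord f2 + v.ord f2)
    (h3 : (c3 : WithTop ℤ) ≤ v.ord f3 + v.ord f3)
    (ht : t ≤ c1 + c2 + c3) :
    (t : WithTop ℤ) ≤ v.ord (f1 * f2 * f3) + v.ord (f1 * f2 * f3) := by
  have e : v.ord (f1 * f2 * f3) = v.ord f1 + v.ord f2 + v.ord f3 := by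
    rw [v.ord_mul, v.ord_mul]
  rw [e]
  calc (t : WithTop ℤ) ≤ ((c1 + c2 + c3 : ℤ) : WithTop ℤ) := by exact_mod_cast ht
    _ = ((c1 : ℤ) : WithTop ℤ) + ((c2 : ℤ) : WithTop ℤ) + ((c3 : ℤ) : WithTop ℤ) := by
        push_cast; ring
    _ ≤ (v.ord f1 + v.ord f1) + (v.ord f2 + v.ord f2) + (v.ord f3 + v.ord f3) :=
        add_le_add (add_le_add h1 h2) h3
    _ = (v.ord f1 + v.ord f2 + v.ord f3) + (v.ord f1 + v.ord f2 + v.ord f3) := by abel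

lemma aux_dbl_of_single {c : ℤ} {x : F} (h : (c : WithTop ℤ) ≤ v.ord x) :
    ((2 * c : ℤ) : WithTop ℤ) ≤ v.ord x + v.ord x := by
  calc ((2 * c : ℤ) : WithTop ℤ) = ((c : ℤ) : WithTop ℤ) + ((c : ℤ) : WithTop ℤ) := by
        exact_mod_cast (two_mul c)
    _ ≤ v.ord x + v.ord x := add_le_add h h

end AuxDbl

/-! ### Even cardinality of the non-fixed set of an involution -/

lemma aux_even_card_aux {ι : Type*} [DecidableEq ι] (σ : ι → ι) (hσ : ∀ i, σ (σ i) = i) :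
    ∀ (N : ℕ) (s : Finset ι), s.card = N → (∀ i ∈ s, σ i ∈ s) → (∀ i ∈ s, σ i ≠ i) →
      Even s.card := by
  intro N
  induction N using Nat.strong_induction_on with
  | _ N ih =>
    intro s hcard hcl hnf
    rcases s.eq_empty_or_nonempty with rfl | ⟨x, hx⟩
    · simp
    · have hσx : σ x ∈ s := hcl x hx
      have hσxx : σ x ≠ x := hnf x hx
      set t := (s.erase x).erase (σ x) with ht
      have hxt : σ x ∈ s.erase x := Finset.mem_erase.2 ⟨hσxx, hσx⟩
      have hcardt : t.card + 2 = N := by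
        rw [ht, Finset.card_erase_of_mem hxt, Finset.card_erase_of_mem hx, hcard]
        have : 2 ≤ s.card := Finset.one_lt_card.2 ⟨σ x, hσx, x, hx, hσxx⟩
        omega
      have hmem : ∀ i, i ∈ t ↔ (i ∈ s ∧ i ≠ x ∧ i ≠ σ x) := by
        intro i
        simp only [ht, Finset.mem_erase]
        tauto
      have hclt : ∀ i ∈ t, σ i ∈ t := by
        intro i hi
        rcases (hmem i).1 hi with ⟨his, hix, hiσx⟩
        refine (hmem (σ i)).2 ⟨hcl i his, ?_, ?_⟩
        · intro h; exact hiσx (by rw [← hσ i, h])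
        · intro h
          have : σ (σ i) = σ (σ x) := by rw [h]
          rw [hσ, hσ] at this
          exact hix this
      have hnft : ∀ i ∈ t, σ i ≠ i := fun i hi => hnf i ((hmem i).1 hi).1
      have hevent : Even t.card := ih t.card (by omega) t rfl hclt hnft
      rw [hcard] at *
      rw [← hcardt]
      rcases hevent with ⟨k, hk⟩
      exact ⟨k + 1, by omega⟩

lemma aux_even_card_nonfixed {ι : Type*} [Fintype ι] [DecidableEq ι] (σ : ι → ι)
    (hσ : ∀ i, σ (σ i) = i) :
    Even (Finset.univ.filter fun i => σ i ≠ i).card := by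
  apply aux_even_card_aux σ hσ _ _ rfl
  · intro i hi
    simp only [Finset.mem_filter, Finset.mem_univ, true_and] at hi ⊢
    intro h
    exact hi (((hσ i).symm.trans h).symm)
  · intro i hi
    simpa using hi

section MoreWT

lemma wt_double_shift {e' : ℤ} {z : WithTop ℤ} {c : ℤ}
    (h : (c : WithTop ℤ) ≤ (e' : WithTop ℤ) + z + ((e' : WithTop ℤ) + z)) :
    ((c - 2 * e' : ℤ) : WithTop ℤ) ≤ z + z := by
  apply wt_shift_sub (m := 2 * e')
  calc ((c : ℤ) : WithTop ℤ) ≤ _ := h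
    _ = ((2 * e' : ℤ) : WithTop ℤ) + (z + z) := by
        rw [show ((2 * e' : ℤ) : WithTop ℤ) = (e' : WithTop ℤ) + (e' : WithTop ℤ) from by
          exact_mod_cast two_mul e']
        abel

lemma wt_shift_add2 {c m : ℤ} {z : WithTop ℤ}
    (h : ((c - 2 * m : ℤ) : WithTop ℤ) ≤ z + z) :
    (c : WithTop ℤ) ≤ ((m : ℤ) : WithTop ℤ) + z + (((m : ℤ) : WithTop ℤ) + z) := by
  have hc : ((c : ℤ) : WithTop ℤ) = ((2 * m : ℤ) : WithTop ℤ) + ((c - 2 * m : ℤ) : WithTop ℤ) := by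
    exact_mod_cast (by ring : c = 2 * m + (c - 2 * m))
  rw [hc]
  calc ((2 * m : ℤ) : WithTop ℤ) + ((c - 2 * m : ℤ) : WithTop ℤ)
      ≤ ((2 * m : ℤ) : WithTop ℤ) + (z + z) := add_le_add_right h _
    _ = _ := by
        rw [show ((2 * m : ℤ) : WithTop ℤ) = ((m : ℤ) : WithTop ℤ) + ((m : ℤ) : WithTop ℤ) from by
          exact_mod_cast two_mul m]
        abel

lemma wt_coe_add_assoc {m k : ℤ} {z : WithTop ℤ} :
    (m : WithTop ℤ) + ((k : WithTop ℤ) + z) = ((m + k : ℤ) : WithTop ℤ) + z := by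
  rw [← add_assoc, ← WithTop.coe_add]

lemma wt_le_add_of {c m : ℤ} {z : WithTop ℤ} (h : ((c - m : ℤ) : WithTop ℤ) ≤ z) :
    (c : WithTop ℤ) ≤ (m : WithTop ℤ) + z := by
  induction z using WithTop.recTopCoe with
  | top => simp
  | coe t =>
    have h2 : c - m ≤ t := by exact_mod_cast h
    have : c ≤ m + t := by omega
    exact_mod_cast this

lemma wt_coe_mono {m k : ℤ} (h : m ≤ k) {z : WithTop ℤ} (hz : (k : WithTop ℤ) ≤ z) :
    (m : WithTop ℤ) ≤ z := le_trans (by exact_mod_cast h) hz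

end MoreWT

section AuxOrd2

variable {F : Type*} [Field F] (v : LocalFieldData F)

lemma aux_ord_sub_eq_left {x y : F} (h : v.ord x < v.ord y) : v.ord (x - y) = v.ord x := by
  rw [sub_eq_add_neg]
  exact aux_ord_add_eq_left v (by rwa [v.ord_neg])

lemma aux_ord_pair_int {x : F} {c : ℤ} (h : v.ord x + v.ord x = (c : WithTop ℤ)) :
    ∃ m : ℤ, v.ord x = (m : WithTop ℤ) ∧ c = 2 * m := by
  rcases hv : v.ord x with _ | m
  · exfalso
    have htop : v.ord x + v.ord x = ⊤ := by rw [WithTop.add_eq_top]; left; exact hv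
    rw [h] at htop
    exact WithTop.coe_ne_top htop
  · rw [hv, WithTop.some_eq_coe] at h
    refine ⟨m, by rfl, ?_⟩
    have : (m + m : ℤ) = c := by exact_mod_cast h
    omega

end AuxOrd2

/-! ### Reduced-like matrices and the Schur complement step -/

section Schur

open Matrix

variable {F : Type*} [Field F] [CharZero F] (v : LocalFieldData F)

structure RedM {ι : Type} [Fintype ι] [DecidableEq ι]
    (B : Matrix ι ι F) (a : ι → ℤ) (σ : ι → ι) : Prop where
  symm : ∀ i j, B j i = B i j
  invol : ∀ i, σ (σ i) = i
  diag_ge : ∀ i, ((a i : ℤ) : WithTop ℤ) ≤ v.ord (B i i)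
  diag_eq : ∀ i, σ i = i → v.ord (B i i) = ((a i : ℤ) : WithTop ℤ)
  pair_eq : ∀ i, σ i ≠ i →
    v.ord (2 * B i (σ i)) + v.ord (2 * B i (σ i)) = ((a i + a (σ i) : ℤ) : WithTop ℤ)
  off : ∀ i j, j ≠ i → j ≠ σ i →
    ((a i + a j + 1 : ℤ) : WithTop ℤ) ≤ v.ord (2 * B i j) + v.ord (2 * B i j)

lemma schur_step {ι : Type} [Fintype ι] [DecidableEq ι]
    {B : Matrix ι ι F} {a : ι → ℤ} {σ : ι → ι} {e : ℤ}
    (he : v.ord (2 : F) = ((e : ℤ) : WithTop ℤ)) (he1 : 1 ≤ e)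
    (hred : RedM v B a σ) {p : ι} (hp : σ p ≠ p) :
    ∃ (B' : Matrix {x : ι // ¬(x = p ∨ x = σ p)} {x : ι // ¬(x = p ∨ x = σ p)} F)
      (σ' : {x : ι // ¬(x = p ∨ x = σ p)} → {x : ι // ¬(x = p ∨ x = σ p)}) (d : F) (w : ℤ),
      (∀ x, ((σ' x : ι) = σ (x : ι))) ∧
      RedM v B' (fun x => a (x : ι)) σ' ∧
      B.det = d * B'.det ∧
      (a p + a (σ p) = 2 * w) ∧
      v.ord d = ((2 * w - 2 * e : ℤ) : WithTop ℤ) ∧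
      (∃ c : F, 0 ≤ v.ord c ∧ (-4 : F) * d = (2 * B p (σ p)) ^ 2 * (1 + 4 * c)) ∧
      Fintype.card {x : ι // ¬(x = p ∨ x = σ p)} + 2 = Fintype.card ι := by
  classical
  set q := σ p with hq
  have hσq : σ q = p := hred.invol p
  have hqp : q ≠ p := hp
  have hpair : v.ord (2 * B p q) + v.ord (2 * B p q) = ((a p + a q : ℤ) : WithTop ℤ) :=
    hred.pair_eq p hp
  obtain ⟨wB, hwB, hw2'⟩ := aux_ord_pair_int v hpair
  have hw2 : a p + a q = 2 * wB := hw2'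
  have hBpq0 : (2 : F) * B p q ≠ 0 := aux_ne_zero_of_ord v hwB
  have hBpqne : B p q ≠ 0 := fun h => hBpq0 (by rw [h, mul_zero])
  have hordBpq : v.ord (B p q) = ((wB - e : ℤ) : WithTop ℤ) := by
    have hm := v.ord_mul 2 (B p q)
    rw [hwB, he] at hm
    exact wt_cancel_coe hm.symm
  have hsympq : B q p = B p q := hred.symm p q
  set dA : F := B p p * B q q - B p q * B p q with hdA
  have hordBpq2 : v.ord (B p q * B p q) = ((2 * wB - 2 * e : ℤ) : WithTop ℤ) := by
    rw [v.ord_mul, hordBpq]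
    have : (wB - e) + (wB - e) = 2 * wB - 2 * e := by ring
    exact_mod_cast this
  have hordpp_qq : ((2 * wB : ℤ) : WithTop ℤ) ≤ v.ord (B p p * B q q) := by
    rw [v.ord_mul]
    have hcast : ((2 * wB : ℤ) : WithTop ℤ) = ((a p : ℤ) : WithTop ℤ) + ((a q : ℤ) : WithTop ℤ) := by
      rw [← hw2]; exact_mod_cast rfl
    rw [hcast]
    exact add_le_add (hred.diag_ge p) (hred.diag_ge q)
  have horddA : v.ord dA = ((2 * wB - 2 * e : ℤ) : WithTop ℤ) := by
    rw [hdA, aux_ord_sub_eq_right v (by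
      rw [hordBpq2]
      refine lt_of_lt_of_le ?_ hordpp_qq
      exact_mod_cast (by omega : 2 * wB - 2 * e < 2 * wB))]
    exact hordBpq2
  have hdAne : dA ≠ 0 := aux_ne_zero_of_ord v horddA
  have hordinv : v.ord dA⁻¹ = ((-(2 * wB - 2 * e) : ℤ) : WithTop ℤ) := aux_ord_inv v horddA
  -- the unit part of the pair block
  have hc1 : ∃ c : F, 0 ≤ v.ord c ∧ (-4 : F) * dA = (2 * B p q) ^ 2 * (1 + 4 * c) := by
    refine ⟨-(B p p * B q q) / (2 * B p q) ^ 2, ?_, ?_⟩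
    · have h4 : v.ord ((2 * B p q) ^ 2) = ((2 * wB : ℤ) : WithTop ℤ) := by
        rw [pow_two, v.ord_mul, hwB]
        exact_mod_cast (two_mul wB).symm
      rw [div_eq_mul_inv, v.ord_mul, v.ord_neg, aux_ord_inv v h4]
      calc (0 : WithTop ℤ) = ((2 * wB : ℤ) : WithTop ℤ) + ((-(2 * wB) : ℤ) : WithTop ℤ) := by
            exact_mod_cast (by ring : (0 : ℤ) = 2 * wB + -(2 * wB))
        _ ≤ _ := add_le_add hordpp_qq le_rfl
    · have h2 : ((2 : F) * B p q) ^ 2 ≠ 0 := pow_ne_zero 2 hBpq0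
      field_simp
      rw [hdA]
      ring
  -- matrix block decomposition
  set P : ι → Prop := fun x => x = p ∨ x = q with hP
  letI : DecidablePred P := fun x => inferInstanceAs (Decidable (x = p ∨ x = q))
  set pp : {x : ι // P x} := ⟨p, Or.inl rfl⟩ with hpp
  set qq : {x : ι // P x} := ⟨q, Or.inr rfl⟩ with hqq
  have hppqq : pp ≠ qq := fun h => hqp (congrArg Subtype.val h).symm
  have hαcases : ∀ x : {x : ι // P x}, x = pp ∨ x = qq := fun x => x.2.imp Subtype.ext Subtype.ext
  have huniv : (Finset.univ : Finset {x : ι // P x}) = {pp, qq} := by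
    ext x
    simp only [Finset.mem_univ, true_iff, Finset.mem_insert, Finset.mem_singleton]
    exact hαcases x
  have sum_pair : ∀ f : {x : ι // P x} → F, ∑ x : {x : ι // P x}, f x = f pp + f qq := by
    intro f
    rw [huniv, Finset.sum_insert (by simpa using hppqq), Finset.sum_singleton]
  set E := Equiv.sumCompl P with hE
  set M : Matrix ({x : ι // P x} ⊕ {x : ι // ¬P x}) ({x : ι // P x} ⊕ {x : ι // ¬P x}) F :=
    B.submatrix E E with hM
  have hdetM : M.det = B.det := Matrix.det_submatrix_equiv_self E B
  have hA1 : ∀ i j : {x : ι // P x}, M.toBlocks₁₁ i j = B i.1 j.1 := by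
    intro i j; simp [hM, Matrix.toBlocks₁₁, hE]
  have hC1 : ∀ (i : {x : ι // P x}) (l : {x : ι // ¬P x}), M.toBlocks₁₂ i l = B i.1 l.1 := by
    intro i l; simp [hM, Matrix.toBlocks₁₂, hE]
  have hC2 : ∀ (k : {x : ι // ¬P x}) (i : {x : ι // P x}), M.toBlocks₂₁ k i = B k.1 i.1 := by
    intro k i; simp [hM, Matrix.toBlocks₂₁, hE]
  have hA2 : ∀ k l : {x : ι // ¬P x}, M.toBlocks₂₂ k l = B k.1 l.1 := by
    intro k l; simp [hM, Matrix.toBlocks₂₂, hE]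
  set X : Matrix {x : ι // P x} {x : ι // P x} F := Matrix.of (fun i j =>
    dA⁻¹ * (if i = pp then (if j = pp then B q q else -(B p q))
            else (if j = pp then -(B p q) else B p p))) with hX
  have hXpp : X pp pp = dA⁻¹ * B q q := by rw [hX]; simp
  have hXpq : X pp qq = dA⁻¹ * (-(B p q)) := by
    rw [hX]; simp [Ne.symm hppqq]
  have hXqp : X qq pp = dA⁻¹ * (-(B p q)) := by
    rw [hX]; simp [Ne.symm hppqq]
  have hXqq : X qq qq = dA⁻¹ * B p p := by
    rw [hX]; simp [Ne.symm hppqq]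
  have hA1X : M.toBlocks₁₁ * X = 1 := by
    ext i j
    rw [Matrix.mul_apply, sum_pair (fun x => M.toBlocks₁₁ i x * X x j)]
    rcases hαcases i with rfl | rfl <;> rcases hαcases j with rfl | rfl
    · rw [hA1, hA1, hXpp, hXqp, Matrix.one_apply_eq]
      have hr : B p p * (dA⁻¹ * B q q) + B p q * (dA⁻¹ * -(B p q)) =
          dA⁻¹ * (B p p * B q q - B p q * B p q) := by ring
      rw [hr, ← hdA, inv_mul_cancel₀ hdAne]
    · rw [hA1, hA1, hXpq, hXqq, Matrix.one_apply_ne hppqq]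
      have hr : B p p * (dA⁻¹ * -(B p q)) + B p q * (dA⁻¹ * B p p) = dA⁻¹ * 0 := by ring
      rw [hr, mul_zero]
    · rw [hA1, hA1, hXpp, hXqp, Matrix.one_apply_ne (Ne.symm hppqq), hsympq]
      have hr : B p q * (dA⁻¹ * B q q) + B q q * (dA⁻¹ * -(B p q)) = dA⁻¹ * 0 := by ring
      rw [hr, mul_zero]
    · rw [hA1, hA1, hXpq, hXqq, Matrix.one_apply_eq, hsympq]
      have hr : B p q * (dA⁻¹ * -(B p q)) + B q q * (dA⁻¹ * B p p) =
          dA⁻¹ * (B p p * B q q - B p q * B p q) := by ring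
      rw [hr, ← hdA, inv_mul_cancel₀ hdAne]
  -- the 2x2 determinant
  set e2 : Fin 2 ≃ {x : ι // P x} :=
    { toFun := ![pp, qq]
      invFun := fun x => if x = pp then 0 else 1
      left_inv := by
        intro i
        fin_cases i
        · simp
        · simp [Ne.symm hppqq]
      right_inv := by
        intro x
        rcases hαcases x with rfl | rfl
        · simp
        · simp [Ne.symm hppqq] } with he2
  have hdetA1 : (M.toBlocks₁₁).det = dA := by
    have hsub : ((M.toBlocks₁₁).submatrix e2 e2).det = (M.toBlocks₁₁).det :=
      Matrix.det_submatrix_equiv_self e2 _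
    rw [← hsub]
    have hmat : (M.toBlocks₁₁).submatrix e2 e2 = !![B p p, B p q; B q p, B q q] := by
      ext i j
      fin_cases i <;> fin_cases j <;>
        simp [Matrix.submatrix_apply, he2, hA1, hpp, hqq]
    rw [hmat, Matrix.det_fin_two_of, hdA, hsympq]
  haveI : Invertible M.toBlocks₁₁ :=
    (M.toBlocks₁₁).invertibleOfIsUnitDet (by rw [hdetA1]; exact isUnit_iff_ne_zero.2 hdAne)
  have hinv : (M.toBlocks₁₁)⁻¹ = X := Matrix.inv_eq_right_inv hA1X
  have hIdet : M.det = dA * (M.toBlocks₂₂ - M.toBlocks₂₁ * X * M.toBlocks₁₂).det := by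
    conv_lhs => rw [← Matrix.fromBlocks_toBlocks M]
    rw [Matrix.det_fromBlocks₁₁, Matrix.invOf_eq_nonsing_inv, hinv, hdetA1]
  -- Schur complement, explicitly
  set N : ι → ι → F := fun k l =>
    B k p * B q q * B p l - B k p * B p q * B q l - B k q * B p q * B p l + B k q * B p p * B q l
    with hN
  set SM : Matrix {x : ι // ¬P x} {x : ι // ¬P x} F :=
    Matrix.of (fun k l => B k.1 l.1 - dA⁻¹ * N k.1 l.1) with hSM
  have hSchur : M.toBlocks₂₂ - M.toBlocks₂₁ * X * M.toBlocks₁₂ = SM := by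
    ext k l
    simp only [Matrix.sub_apply, hSM, Matrix.of_apply]
    rw [hA2 k l]
    congr 1
    simp only [Matrix.mul_apply]
    rw [sum_pair (fun j => (∑ i : {x : ι // P x}, M.toBlocks₂₁ k i * X i j) * M.toBlocks₁₂ j l)]
    rw [sum_pair (fun i => M.toBlocks₂₁ k i * X i pp),
        sum_pair (fun i => M.toBlocks₂₁ k i * X i qq)]
    rw [hC2 k pp, hC2 k qq, hC1 pp l, hC1 qq l, hXpp, hXpq, hXqp, hXqq, hN]
    ring
  have hNsymm : ∀ k l : ι, N l k = N k l := by
    intro k l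
    simp only [hN]
    rw [hred.symm p l, hred.symm k q, hred.symm k p, hred.symm q l]
    ring
  -- sigma restricts
  have hβσ : ∀ x : {x : ι // ¬P x}, ¬P (σ x.1) := by
    intro x hPx
    rcases hPx with h | h
    · have h2 := hred.invol x.1
      rw [h] at h2
      exact x.2 (Or.inr (by rw [hq, ← h2]))
    · have h2 := hred.invol x.1
      rw [h] at h2
      exact x.2 (Or.inl (by rw [← hσq, ← h2]))
  set σ' : {x : ι // ¬P x} → {x : ι // ¬P x} := fun x => ⟨σ x.1, hβσ x⟩ with hσ'
  have hσ'val : ∀ x : {x : ι // ¬P x}, (σ' x).1 = σ x.1 := fun x => rfl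
  have hmemβ : ∀ x : {x : ι // ¬P x}, x.1 ≠ p ∧ x.1 ≠ q :=
    fun x => ⟨fun h => x.2 (Or.inl h), fun h => x.2 (Or.inr h)⟩
  -- entry estimates (doubled form)
  have hvp : ∀ k : ι, k ≠ p → k ≠ q →
      ((a k + a p + 1 - 2 * e : ℤ) : WithTop ℤ) ≤ v.ord (B k p) + v.ord (B k p) := by
    intro k hkp hkq
    have h := hred.off p k hkp (fun h => hkq (by rw [hq]; exact h))
    rw [hred.symm k p, v.ord_mul, he] at h
    have h3 := wt_double_shift h
    rw [show a p + a k + 1 - 2 * e = a k + a p + 1 - 2 * e from by ring] at h3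
    exact h3
  have hvq : ∀ k : ι, k ≠ p → k ≠ q →
      ((a k + a q + 1 - 2 * e : ℤ) : WithTop ℤ) ≤ v.ord (B k q) + v.ord (B k q) := by
    intro k hkp hkq
    have h := hred.off q k hkq (fun h => hkp (by rw [← hσq]; exact h))
    rw [hred.symm k q, v.ord_mul, he] at h
    have h3 := wt_double_shift h
    rw [show a q + a k + 1 - 2 * e = a k + a q + 1 - 2 * e from by ring] at h3
    exact h3
  have hvp' : ∀ l : ι, l ≠ p → l ≠ q →
      ((a p + a l + 1 - 2 * e : ℤ) : WithTop ℤ) ≤ v.ord (B p l) + v.ord (B p l) := by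
    intro l hlp hlq
    have h := hred.off p l hlp (fun h => hlq (by rw [hq]; exact h))
    rw [v.ord_mul, he] at h
    exact wt_double_shift h
  have hvq' : ∀ l : ι, l ≠ p → l ≠ q →
      ((a q + a l + 1 - 2 * e : ℤ) : WithTop ℤ) ≤ v.ord (B q l) + v.ord (B q l) := by
    intro l hlp hlq
    have h := hred.off q l hlq (fun h => hlp (by rw [← hσq]; exact h))
    rw [v.ord_mul, he] at h
    exact wt_double_shift h
  have hv2p : ∀ k : ι, k ≠ p → k ≠ q →
      ((a k + a p + 1 : ℤ) : WithTop ℤ) ≤ v.ord (2 * B k p) + v.ord (2 * B k p) := by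
    intro k hkp hkq
    have h := hred.off p k hkp (fun h => hkq (by rw [hq]; exact h))
    rw [hred.symm k p] at h
    rw [show a k + a p + 1 = a p + a k + 1 from by ring]
    exact h
  have hdiagp : ((2 * a p : ℤ) : WithTop ℤ) ≤ v.ord (B p p) + v.ord (B p p) :=
    aux_dbl_of_single v (hred.diag_ge p)
  have hdiagq : ((2 * a q : ℤ) : WithTop ℤ) ≤ v.ord (B q q) + v.ord (B q q) :=
    aux_dbl_of_single v (hred.diag_ge q)
  have hBpqd : ((2 * wB - 2 * e : ℤ) : WithTop ℤ) ≤ v.ord (B p q) + v.ord (B p q) := by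
    rw [hordBpq]
    exact le_of_eq (by exact_mod_cast (by ring : 2 * wB - 2 * e = (wB - e) + (wB - e)))
  have hBpq2d : ((2 * wB : ℤ) : WithTop ℤ) ≤ v.ord (2 * B p q) + v.ord (2 * B p q) := by
    rw [hwB]
    exact le_of_eq (by exact_mod_cast (two_mul wB))
  -- the key off-diagonal correction bound
  have hNbound : ∀ k l : ι, k ≠ p → k ≠ q → l ≠ p → l ≠ q →
      ((a k + a l + 4 * wB + 2 - 6 * e : ℤ) : WithTop ℤ) ≤ v.ord (N k l) + v.ord (N k l) := by
    intro k l hkp hkq hlp hlq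
    have t1 := aux_dbl_mul3 v (hvp k hkp hkq) hdiagq (hvp' l hlp hlq)
      (t := a k + a l + 4 * wB + 2 - 6 * e) (by omega)
    have t2 := aux_dbl_mul3 v (hvp k hkp hkq) hBpqd (hvq' l hlp hlq)
      (t := a k + a l + 4 * wB + 2 - 6 * e) (by omega)
    have t3 := aux_dbl_mul3 v (hvq k hkp hkq) hBpqd (hvp' l hlp hlq)
      (t := a k + a l + 4 * wB + 2 - 6 * e) (by omega)
    have t4 := aux_dbl_mul3 v (hvq k hkp hkq) hdiagp (hvq' l hlp hlq)
      (t := a k + a l + 4 * wB + 2 - 6 * e) (by omega)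
    simp only [hN]
    exact aux_dbl_add v (aux_dbl_sub v (aux_dbl_sub v t1 t2) t3) t4
  have hcorr_dbl : ∀ k l : ι, k ≠ p → k ≠ q → l ≠ p → l ≠ q →
      ((a k + a l + 2 : ℤ) : WithTop ℤ) ≤
        v.ord (2 * (dA⁻¹ * N k l)) + v.ord (2 * (dA⁻¹ * N k l)) := by
    intro k l hkp hkq hlp hlq
    rw [v.ord_mul, v.ord_mul, he, hordinv, wt_coe_add_assoc]
    apply wt_shift_add2
    have := hNbound k l hkp hkq hlp hlq
    rw [show a k + a l + 2 - 2 * (e + -(2 * wB - 2 * e)) = a k + a l + 4 * wB + 2 - 6 * e from by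
      ring]
    exact this
  -- the diagonal correction bound
  have hNkk : ∀ k : ι, N k k =
      B k p * B q q * B k p + (-((2 * B k p) * B p q * B k q) + B k q * B p p * B k q) := by
    intro k
    simp only [hN]
    rw [hred.symm k p, hred.symm k q]
    ring
  have hNdiag : ∀ k : ι, k ≠ p → k ≠ q →
      ((2 * a k + 4 * wB + 2 - 4 * e : ℤ) : WithTop ℤ) ≤ v.ord (N k k) + v.ord (N k k) := by
    intro k hkp hkq
    have t1 := aux_dbl_mul3 v (hvp k hkp hkq) hdiagq (hvp k hkp hkq)
      (t := 2 * a k + 4 * wB + 2 - 4 * e) (by omega)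
    have t2 := aux_dbl_mul3 v (hv2p k hkp hkq) hBpqd (hvq k hkp hkq)
      (t := 2 * a k + 4 * wB + 2 - 4 * e) (by omega)
    have t4 := aux_dbl_mul3 v (hvq k hkp hkq) hdiagp (hvq k hkp hkq)
      (t := 2 * a k + 4 * wB + 2 - 4 * e) (by omega)
    rw [hNkk k]
    exact aux_dbl_add v t1 (aux_dbl_add v (aux_dbl_neg v t2) t4)
  have hcorrkk : ∀ k : ι, k ≠ p → k ≠ q →
      ((a k + 1 : ℤ) : WithTop ℤ) ≤ v.ord (dA⁻¹ * N k k) := by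
    intro k hkp hkq
    rw [v.ord_mul, hordinv]
    apply wt_le_add_of
    apply wt_half_le
    rw [show 2 * (a k + 1 - -(2 * wB - 2 * e)) = 2 * a k + 4 * wB + 2 - 4 * e from by ring]
    exact hNdiag k hkp hkq
  -- assemble
  refine ⟨SM, σ', dA, wB, hσ'val, ?_, ?_, hw2, horddA, hc1, ?_⟩
  · -- RedM for the Schur complement
    constructor
    · intro x y
      simp only [hSM, Matrix.of_apply]
      rw [hred.symm x.1 y.1, hNsymm x.1 y.1]
    · intro x
      exact Subtype.ext (hred.invol x.1)
    · intro x
      simp only [hSM, Matrix.of_apply]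
      refine aux_le_ord_sub v (hred.diag_ge x.1) ?_
      exact wt_coe_mono (by omega) (hcorrkk x.1 (hmemβ x).1 (hmemβ x).2)
    · intro x hx
      have hfix : σ x.1 = x.1 := congrArg Subtype.val hx
      simp only [hSM, Matrix.of_apply]
      rw [aux_ord_sub_eq_left v ?_]
      · exact hred.diag_eq x.1 hfix
      · rw [hred.diag_eq x.1 hfix]
        refine lt_of_lt_of_le ?_ (hcorrkk x.1 (hmemβ x).1 (hmemβ x).2)
        exact_mod_cast (by omega : a x.1 < a x.1 + 1)
    · intro x hx
      have hnfix : σ x.1 ≠ x.1 := fun h => hx (Subtype.ext h)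
      have hpx := hred.pair_eq x.1 hnfix
      obtain ⟨wkl, hwkl, hw2kl'⟩ := aux_ord_pair_int v hpx
      have hw2kl : a x.1 + a (σ x.1) = 2 * wkl := hw2kl'
      have hcd := hcorr_dbl x.1 (σ x.1) (hmemβ x).1 (hmemβ x).2 (hβσ x ∘ Or.inl) (hβσ x ∘ Or.inr)
      rw [show a x.1 + a (σ x.1) + 2 = 2 * wkl + 2 from by omega] at hcd
      have hcd2 := wt_half_le' hcd
      have hent : (2 : F) * SM x (σ' x) = 2 * B x.1 (σ x.1) - 2 * (dA⁻¹ * N x.1 (σ x.1)) := by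
        simp only [hSM, Matrix.of_apply, hσ'val]
        ring
      rw [hent, aux_ord_sub_eq_left v (by
        rw [hwkl]
        refine lt_of_lt_of_le ?_ hcd2
        exact_mod_cast (by omega : wkl < wkl + 1))]
      rw [hwkl]
      have : (wkl + wkl : ℤ) = a x.1 + a (σ x.1) := by omega
      exact_mod_cast this
    · intro x y hyx hyσ
      have h1 : y.1 ≠ x.1 := fun h => hyx (Subtype.ext h)
      have h2 : y.1 ≠ σ x.1 := fun h => hyσ (Subtype.ext h)
      have hB := hred.off x.1 y.1 h1 h2
      have hcd := hcorr_dbl x.1 y.1 (hmemβ x).1 (hmemβ x).2 (hmemβ y).1 (hmemβ y).2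
      have hent : (2 : F) * SM x y = 2 * B x.1 y.1 - 2 * (dA⁻¹ * N x.1 y.1) := by
        simp only [hSM, Matrix.of_apply]
        ring
      rw [hent]
      exact aux_dbl_sub v hB (wt_coe_mono (by omega) hcd)
  · -- determinant
    rw [← hdetM, hIdet, hSchur]
  · -- cardinality
    have hcι : Fintype.card ι = Fintype.card ({x : ι // P x} ⊕ {x : ι // ¬P x}) :=
      (Fintype.card_congr E).symm
    have hcα : Fintype.card {x : ι // P x} = 2 := by
      rw [← Fintype.card_congr e2, Fintype.card_fin]
    rw [hcι, Fintype.card_sum, hcα]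
    have hsame : Fintype.card {x : ι // ¬(x = p ∨ x = q)} = Fintype.card {x : ι // ¬P x} :=
      Fintype.card_congr (Equiv.refl _)
    rw [hsame]
    omega

end Schur

section Induction

open Matrix

variable {F : Type*} [Field F] [CharZero F] (v : LocalFieldData F)

lemma redM_det_ord {e : ℤ} (he : v.ord (2 : F) = ((e : ℤ) : WithTop ℤ)) (he1 : 1 ≤ e) :
    ∀ (Nc : ℕ) (ι : Type) [Fintype ι] [DecidableEq ι]
      (B : Matrix ι ι F) (a : ι → ℤ) (σ : ι → ι), Fintype.card ι = Nc →
      RedM v B a σ → (∀ i j : ι, σ i = i → σ j = j → i = j) →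
      ∃ t : ℤ, v.ord B.det =
        (((∑ i ∈ Finset.univ.filter (fun i => σ i = i), a i) + 2 * t : ℤ) : WithTop ℤ) := by
  intro Nc
  induction Nc using Nat.strong_induction_on with
  | _ Nc ih =>
    intro ι _ _ B a σ hcard hred hf
    by_cases hex : ∃ p, σ p ≠ p
    · obtain ⟨p, hp⟩ := hex
      obtain ⟨B', σ', d, w, hσ'val, hred', hdet, hw2, hordd, hc1, hcard'⟩ :=
        schur_step v he he1 hred hp
      have hf' : ∀ x y : {x : ι // ¬(x = p ∨ x = σ p)}, σ' x = x → σ' y = y → x = y := by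
        intro x y hx hy
        have hx' : σ x.1 = x.1 := by rw [← hσ'val x]; exact congrArg Subtype.val hx
        have hy' : σ y.1 = y.1 := by rw [← hσ'val y]; exact congrArg Subtype.val hy
        exact Subtype.ext (hf x.1 y.1 hx' hy')
      obtain ⟨t', ht'⟩ := ih (Fintype.card {x : ι // ¬(x = p ∨ x = σ p)}) (by omega)
        {x : ι // ¬(x = p ∨ x = σ p)} B' (fun x => a x.1) σ' rfl hred' hf'
      have hsum : (∑ x ∈ Finset.univ.filter
            (fun x : {x : ι // ¬(x = p ∨ x = σ p)} => σ' x = x), a x.1)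
          = ∑ i ∈ Finset.univ.filter (fun i : ι => σ i = i), a i := by
        apply Finset.sum_bij (fun (x : {x : ι // ¬(x = p ∨ x = σ p)}) _ => x.1)
        · intro x hx
          simp only [Finset.mem_filter, Finset.mem_univ, true_and] at hx ⊢
          rw [← hσ'val x]
          exact congrArg Subtype.val hx
        · intro x hx y hy hxy
          exact Subtype.ext hxy
        · intro j hj
          simp only [Finset.mem_filter, Finset.mem_univ, true_and] at hj
          have hjp : ¬(j = p ∨ j = σ p) := by
            rintro (rfl | rfl)
            · exact hp hj
            · exact hp ((hred.invol p).symm.trans hj).symm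
          refine ⟨⟨j, hjp⟩, ?_, rfl⟩
          simp only [Finset.mem_filter, Finset.mem_univ, true_and]
          exact Subtype.ext (by rw [hσ'val]; exact hj)
        · intro x hx
          rfl
      refine ⟨t' + w - e, ?_⟩
      rw [hdet, v.ord_mul, hordd, ht', hsum]
      have hr : (2 * w - 2 * e) + ((∑ i ∈ Finset.univ.filter (fun i : ι => σ i = i), a i)
          + 2 * t') = (∑ i ∈ Finset.univ.filter (fun i : ι => σ i = i), a i)
          + 2 * (t' + w - e) := by ring
      exact_mod_cast hr
    · push_neg at hex
      rcases Nat.eq_zero_or_pos Nc with h0 | hpos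
      · haveI : IsEmpty ι := Fintype.card_eq_zero_iff.mp (by omega)
        refine ⟨0, ?_⟩
        rw [Matrix.det_isEmpty, v.ord_one]
        rw [Finset.univ_eq_empty]
        simp
      · obtain ⟨x⟩ := Fintype.card_pos_iff.mp (by omega : 0 < Fintype.card ι)
        have huniq : ∀ y : ι, y = x := fun y => hf y x (hex y) (hex x)
        haveI : Unique ι := ⟨⟨x⟩, huniq⟩
        refine ⟨0, ?_⟩
        rw [Matrix.det_unique, hred.diag_eq default (hex default)]
        rw [Finset.filter_true_of_mem (fun i _ => hex i), Finset.univ_unique,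
          Finset.sum_singleton]
        exact_mod_cast (by ring : a (default : ι) = a (default : ι) + 2 * 0)

lemma redM_det_sq {e : ℤ} (he : v.ord (2 : F) = ((e : ℤ) : WithTop ℤ)) (he1 : 1 ≤ e) :
    ∀ (Nc : ℕ) (ι : Type) [Fintype ι] [DecidableEq ι]
      (B : Matrix ι ι F) (a : ι → ℤ) (σ : ι → ι), Fintype.card ι = Nc →
      RedM v B a σ → (∀ i : ι, σ i ≠ i) →
      ∃ m c : F, m ≠ 0 ∧ 0 ≤ v.ord c ∧
        (-4 : F) ^ (Fintype.card ι / 2) * B.det = m ^ 2 * (1 + 4 * c) := by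
  intro Nc
  induction Nc using Nat.strong_induction_on with
  | _ Nc ih =>
    intro ι _ _ B a σ hcard hred hnf
    rcases isEmpty_or_nonempty ι with hem | hne
    · refine ⟨1, 0, one_ne_zero, by rw [v.ord_zero]; exact le_top, ?_⟩
      rw [Matrix.det_isEmpty, Fintype.card_eq_zero]
      norm_num
    · obtain ⟨p⟩ := hne
      have hp := hnf p
      obtain ⟨B', σ', d, w, hσ'val, hred', hdet, hw2, hordd, ⟨c1, hc1ord, hc1eq⟩, hcard'⟩ :=
        schur_step v he he1 hred hp
      have hnf' : ∀ x : {x : ι // ¬(x = p ∨ x = σ p)}, σ' x ≠ x := by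
        intro x hx
        exact hnf x.1 (by rw [← hσ'val x]; exact congrArg Subtype.val hx)
      obtain ⟨m', c', hm', hc', heq'⟩ := ih (Fintype.card {x : ι // ¬(x = p ∨ x = σ p)})
        (by omega) {x : ι // ¬(x = p ∨ x = σ p)} B' (fun x => a x.1) σ' rfl hred' hnf'
      have hdne : d ≠ 0 := aux_ne_zero_of_ord v hordd
      have h4d : (-4 : F) * d ≠ 0 := mul_ne_zero (by norm_num) hdne
      have hBpqne : (2 * B p (σ p)) ≠ 0 := by
        intro h0
        rw [hc1eq, h0] at h4d
        simp at h4d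
      have hord4 : v.ord (4 : F) = ((2 * e : ℤ) : WithTop ℤ) := by
        rw [show (4 : F) = 2 * 2 from by norm_num, v.ord_mul, he]
        exact_mod_cast (two_mul e).symm
      refine ⟨(2 * B p (σ p)) * m', c1 + c' + 4 * (c1 * c'), mul_ne_zero hBpqne hm', ?_, ?_⟩
      · refine aux_le_ord_add v (aux_le_ord_add v hc1ord hc') ?_
        rw [v.ord_mul, v.ord_mul, hord4]
        calc (0 : WithTop ℤ) = ((0 : ℤ) : WithTop ℤ) + (0 + 0) := by simp
          _ ≤ ((2 * e : ℤ) : WithTop ℤ) + (v.ord c1 + v.ord c') := by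
              refine add_le_add ?_ (add_le_add hc1ord hc')
              exact_mod_cast (by omega : (0 : ℤ) ≤ 2 * e)
      · have hdiv : Fintype.card ι / 2 = Fintype.card {x : ι // ¬(x = p ∨ x = σ p)} / 2 + 1 := by
          omega
        rw [hdiv, pow_succ, hdet]
        have key : (-4 : F) ^ (Fintype.card {x : ι // ¬(x = p ∨ x = σ p)} / 2) * (-4)
            * (d * B'.det)
            = ((-4 : F) ^ (Fintype.card {x : ι // ¬(x = p ∨ x = σ p)} / 2) * B'.det)
              * ((-4) * d) := by ring
        rw [key, heq', hc1eq]
        ring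

end Induction

section Analytic

variable {F : Type*} [Field F] [CharZero F] (v : LocalFieldData F)

lemma wt_add3_le {c1 c2 c3 t : ℤ} {z1 z2 z3 : WithTop ℤ}
    (h1 : (c1 : WithTop ℤ) ≤ z1) (h2 : (c2 : WithTop ℤ) ≤ z2) (h3 : (c3 : WithTop ℤ) ≤ z3)
    (ht : t ≤ c1 + c2 + c3) : (t : WithTop ℤ) ≤ z1 + (z2 + z3) := by
  calc (t : WithTop ℤ) ≤ ((c1 + c2 + c3 : ℤ) : WithTop ℤ) := by exact_mod_cast ht
    _ = (c1 : WithTop ℤ) + ((c2 : WithTop ℤ) + (c3 : WithTop ℤ)) := by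
        push_cast; rw [add_assoc]
    _ ≤ z1 + (z2 + z3) := add_le_add h1 (add_le_add h2 h3)

lemma aux_ord_pow_zero {x : F} (hx : v.ord x = 0) (k : ℕ) : v.ord (x ^ k) = 0 := by
  induction k with
  | zero => simpa using v.ord_one
  | succ n ihn =>
    rw [pow_succ, v.ord_mul, ihn, hx]
    simp

lemma aux_sq_cancel (hdy : 0 < v.ord (2 : F)) {α β : F}
    (hα : 0 ≤ v.ord α) (hβ : 0 ≤ v.ord β)
    (h : 0 < v.ord (α ^ 2 - β ^ 2)) : 0 < v.ord (α - β) := by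
  have hw0 : 0 ≤ v.ord (α - β) := aux_le_ord_sub v hα hβ
  rcases lt_or_eq_of_le hw0 with h1 | h1
  · exact h1
  · exfalso
    have hid : (α - β) * (α - β) = (α ^ 2 - β ^ 2) - 2 * (β * (α - β)) := by ring
    have hL : v.ord ((α - β) * (α - β)) = 0 := by rw [v.ord_mul, ← h1]; simp
    have h2 : 0 < v.ord (2 * (β * (α - β))) := by
      rw [v.ord_mul]
      have hnn : 0 ≤ v.ord (β * (α - β)) := by
        rw [v.ord_mul]; exact add_nonneg hβ (le_of_eq h1)
      calc (0 : WithTop ℤ) < v.ord (2 : F) + 0 := by simpa using hdy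
        _ ≤ _ := add_le_add le_rfl hnn
    have hR : 0 < v.ord ((α ^ 2 - β ^ 2) - 2 * (β * (α - β))) := by
      rw [sub_eq_add_neg]
      exact aux_lt_ord_add v h (by rwa [v.ord_neg])
    rw [← hid, hL] at hR
    exact lt_irrefl _ hR
  
lemma aux_sqrt_mod (hdy : 0 < v.ord (2 : F)) {x : F} (hx : v.ord x = 0) :
    ∃ t : F, v.ord t = 0 ∧ 0 < v.ord (x - t ^ 2) := by
  obtain ⟨S, hS⟩ := v.residue_finite
  have hordpow : ∀ k : ℕ, v.ord (x ^ (2 ^ k)) = 0 := fun k => aux_ord_pow_zero v hx _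
  have hchoice : ∀ k : ℕ, ∃ s ∈ S, 0 < v.ord (x ^ (2 ^ k) - s) :=
    fun k => hS _ (le_of_eq (hordpow k).symm)
  choose g hgS hglt using hchoice
  obtain ⟨k, l, hlt, hg⟩ : ∃ k l : ℕ, k < l ∧ g k = g l := by
    obtain ⟨k, l, hkl, hgkl⟩ := Finite.exists_ne_map_eq_of_infinite
      (fun k : ℕ => (⟨g k, hgS k⟩ : {s // s ∈ S}))
    rcases lt_or_gt_of_ne hkl with h | h
    · exact ⟨k, l, h, congrArg Subtype.val hgkl⟩
    · exact ⟨l, k, h, (congrArg Subtype.val hgkl).symm⟩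
  have hkey : 0 < v.ord (x ^ (2 ^ k) - x ^ (2 ^ l)) := by
    have h1 := hglt k
    have h2 := hglt l
    rw [← hg] at h2
    have hid : x ^ (2 ^ k) - x ^ (2 ^ l) = (x ^ (2 ^ k) - g k) - (x ^ (2 ^ l) - g k) := by
      ring
    rw [hid, sub_eq_add_neg]
    exact aux_lt_ord_add v h1 (by rwa [v.ord_neg])
  have desc : ∀ k : ℕ, ∀ l : ℕ, k < l → 0 < v.ord (x ^ (2 ^ k) - x ^ (2 ^ l)) →
      0 < v.ord (x - x ^ (2 ^ (l - k))) := by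
    intro k
    induction k with
    | zero =>
      intro l h1 h2
      simpa using h2
    | succ n ihn =>
      intro l h1 h2
      have hl1 : 1 ≤ l := by omega
      have hsq : x ^ (2 ^ (n + 1)) = (x ^ (2 ^ n)) ^ 2 := by
        rw [pow_succ, pow_mul]
      have hsq2 : x ^ (2 ^ l) = (x ^ (2 ^ (l - 1))) ^ 2 := by
        rw [show (2 : ℕ) ^ l = 2 ^ (l - 1) * 2 from by
          rw [← pow_succ]; congr 1; omega, pow_mul]
      rw [hsq, hsq2] at h2
      have h3 := aux_sq_cancel v hdy (le_of_eq (hordpow n).symm)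
        (le_of_eq (hordpow (l - 1)).symm) h2
      have h4 := ihn (l - 1) (by omega) h3
      rwa [show l - 1 - n = l - (n + 1) from by omega] at h4
  have hfin := desc k l hlt hkey
  set d := l - k with hd
  have hd1 : 1 ≤ d := by omega
  refine ⟨x ^ (2 ^ (d - 1)), aux_ord_pow_zero v hx _, ?_⟩
  have hsq : x ^ (2 ^ d) = (x ^ (2 ^ (d - 1))) ^ 2 := by
    rw [show (2 : ℕ) ^ d = 2 ^ (d - 1) * 2 from by
      rw [← pow_succ]; congr 1; omega, pow_mul]
  rwa [hsq] at hfin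

lemma aux_hensel (hdy : 0 < v.ord (2 : F)) {c x' : F} (hc : 0 ≤ v.ord c)
    (hx0 : 0 ≤ v.ord x') (hx1 : 0 < v.ord (x' - 1)) :
    ∃ y : F, x' = y - c * (y - 1) ^ 2 := by
  classical
  set f : F → F := fun t => c * t ^ 2 - (2 * c + 1) * t + (c + x') with hf
  set f' : F → F := fun t => 2 * c * t - (2 * c + 1) with hf'
  set y : ℕ → F := fun k => Nat.recAux x' (fun _ yk => yk - f yk / f' yk) k with hy
  have hy0 : y 0 = x' := rfl
  have hysucc : ∀ k, y (k + 1) = y k - f (y k) / f' (y k) := fun k => rfl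
  have hf'unit : ∀ t : F, 0 ≤ v.ord t → v.ord (f' t) = 0 := by
    intro t ht
    have hid : f' t = -1 + 2 * (c * (t - 1)) := by simp only [hf']; ring
    rw [hid, aux_ord_add_eq_left v (by
      rw [v.ord_neg, v.ord_one, v.ord_mul]
      have h1 : 0 ≤ v.ord (t - 1) := aux_le_ord_sub v ht (le_of_eq v.ord_one.symm)
      have hnn : 0 ≤ v.ord (c * (t - 1)) := by rw [v.ord_mul]; exact add_nonneg hc h1
      calc (0 : WithTop ℤ) < v.ord (2 : F) + 0 := by simpa using hdy
        _ ≤ _ := add_le_add le_rfl hnn)]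
    rw [v.ord_neg, v.ord_one]
  have hquad : ∀ t : F, v.ord (f' t) = 0 → f (t - f t / f' t) = c * (f t / f' t) ^ 2 := by
    intro t hft
    have hne : f' t ≠ 0 := by
      intro h0
      rw [h0, v.ord_zero] at hft
      simp at hft
    have hud : f t / f' t * f' t = f t := div_mul_cancel₀ _ hne
    have hexp : f (t - f t / f' t) = f t - f t / f' t * f' t + c * (f t / f' t) ^ 2 := by
      simp only [hf, hf']; ring
    rw [hexp, hud]; ring
  have hone : ((1 : ℤ) : WithTop ℤ) ≤ v.ord (x' - 1) := by
    have := wt_add_one_le (m := 0) (by exact_mod_cast hx1)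
    simpa using this
  have hinv : ∀ k : ℕ, 0 ≤ v.ord (y k) ∧ (((k : ℤ) + 1 : ℤ) : WithTop ℤ) ≤ v.ord (f (y k)) := by
    intro k
    induction k with
    | zero =>
      refine ⟨hx0, ?_⟩
      have hfx : f x' = c * ((x' - 1) * (x' - 1)) := by simp only [hf]; ring
      rw [hy0, hfx, v.ord_mul, v.ord_mul]
      exact wt_add3_le hc hone hone (by omega)
    | succ n ihn =>
      obtain ⟨hyn, hfn⟩ := ihn
      have hf'n := hf'unit (y n) hyn
      have hordh : (((n : ℤ) + 1 : ℤ) : WithTop ℤ) ≤ v.ord (f (y n) / f' (y n)) := by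
        rw [div_eq_mul_inv, v.ord_mul, aux_ord_inv v (hf'n.trans (by norm_cast))]
        simpa using hfn
      constructor
      · rw [hysucc]
        refine aux_le_ord_sub v hyn (le_trans ?_ hordh)
        exact_mod_cast (by omega : (0 : ℤ) ≤ (n : ℤ) + 1)
      · rw [hysucc, hquad (y n) hf'n, v.ord_mul, pow_two, v.ord_mul]
        exact wt_add3_le hc hordh hordh (by push_cast; omega)
  have hordh : ∀ n : ℕ, (((n : ℤ) + 1 : ℤ) : WithTop ℤ) ≤ v.ord (f (y n) / f' (y n)) := by
    intro n
    have hf'n := hf'unit (y n) (hinv n).1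
    rw [div_eq_mul_inv, v.ord_mul, aux_ord_inv v (hf'n.trans (by norm_cast))]
    simpa using (hinv n).2
  have hcauchy : ∀ k m : ℕ, k ≤ m → (((k : ℤ) + 1 : ℤ) : WithTop ℤ) ≤ v.ord (y m - y k) := by
    intro k m hkm
    induction m with
    | zero =>
      have hk0 : k = 0 := by omega
      subst hk0
      rw [sub_self, v.ord_zero]
      exact le_top
    | succ n ihn =>
      rcases Nat.lt_or_ge k (n + 1) with h | h
      · have h1 := ihn (by omega)
        have hstep : (((k : ℤ) + 1 : ℤ) : WithTop ℤ) ≤ v.ord (y (n + 1) - y n) := by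
          have hid : y (n + 1) - y n = -(f (y n) / f' (y n)) := by rw [hysucc]; ring
          rw [hid, v.ord_neg]
          refine le_trans ?_ (hordh n)
          exact_mod_cast (by omega : (k : ℤ) + 1 ≤ (n : ℤ) + 1)
        have hid2 : y (n + 1) - y k = (y (n + 1) - y n) + (y n - y k) := by ring
        rw [hid2]
        exact aux_le_ord_add v hstep h1
      · have hk1 : k = n + 1 := by omega
        subst hk1
        rw [sub_self, v.ord_zero]
        exact le_top
  obtain ⟨L, hL⟩ := v.complete y (by
    intro N
    refine ⟨N.toNat, fun m hm k hk => ?_⟩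
    rcases le_total k m with h | h
    · refine wt_coe_mono ?_ (hcauchy k m h)
      omega
    · rw [show y m - y k = -(y k - y m) from by ring, v.ord_neg]
      refine wt_coe_mono ?_ (hcauchy m k h)
      omega)
  have hLint : 0 ≤ v.ord L := by
    obtain ⟨M, hM⟩ := hL 0
    have h1 := hM M le_rfl
    have hid : L = y M - (y M - L) := by ring
    rw [hid]
    exact aux_le_ord_sub v (hinv M).1 (le_trans (by norm_cast) h1)
  have hfL : f L = 0 := by
    apply aux_eq_zero_of_ord_all v
    intro N
    obtain ⟨M, hM⟩ := hL N
    have h1 := hM (max M N.toNat) (le_max_left _ _)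
    have hmN : N.toNat ≤ max M N.toNat := le_max_right _ _
    have hdiff : f L - f (y (max M N.toNat)) =
        (L - y (max M N.toNat)) * (c * (L + y (max M N.toNat)) - (2 * c + 1)) := by
      simp only [hf]; ring
    have hfac : 0 ≤ v.ord (c * (L + y (max M N.toNat)) - (2 * c + 1)) := by
      refine aux_le_ord_sub v ?_ ?_
      · rw [v.ord_mul]
        exact add_nonneg hc (aux_le_ord_add v hLint (hinv _).1)
      · refine aux_le_ord_add v ?_ (le_of_eq v.ord_one.symm)
        rw [v.ord_mul]
        exact add_nonneg (le_of_lt hdy) hc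
    have h2 : (N : WithTop ℤ) ≤ v.ord (f L - f (y (max M N.toNat))) := by
      rw [hdiff, v.ord_mul]
      calc (N : WithTop ℤ) ≤ v.ord (L - y (max M N.toNat)) := by
            rw [show L - y (max M N.toNat) = -(y (max M N.toNat) - L) from by ring, v.ord_neg]
            exact h1
        _ = v.ord (L - y (max M N.toNat)) + 0 := (add_zero _).symm
        _ ≤ _ := add_le_add le_rfl hfac
    have h3 : (N : WithTop ℤ) ≤ v.ord (f (y (max M N.toNat))) := by
      refine wt_coe_mono ?_ (hinv (max M N.toNat)).2
      omega
    have hid : f L = (f L - f (y (max M N.toNat))) + f (y (max M N.toNat)) := by ring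
    rw [hid]
    exact aux_le_ord_add v h2 h3
  refine ⟨L, ?_⟩
  simp only [hf] at hfL
  linear_combination hfL

lemma aux_norm (hdy : 0 < v.ord (2 : F)) {c : F} (hc : 0 ≤ v.ord c) :
    ∀ x : F, v.ord x = 0 → ∃ A B : F, x = A ^ 2 - (1 + 4 * c) * B ^ 2 := by
  intro x hx
  obtain ⟨t, ht0, htlt⟩ := aux_sqrt_mod v hdy hx
  have htne : t ≠ 0 := by
    intro h0
    rw [h0, v.ord_zero] at ht0
    simp at ht0
  have ht2 : v.ord (t ^ 2) = 0 := aux_ord_pow_zero v ht0 2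
  have ht2ne : t ^ 2 ≠ 0 := pow_ne_zero 2 htne
  set x' := x / t ^ 2 with hx'
  have hx'0 : v.ord x' = 0 := by
    rw [hx', div_eq_mul_inv, v.ord_mul, aux_ord_inv v (ht2.trans (by norm_cast)), hx]
    simp
  have hx'1 : 0 < v.ord (x' - 1) := by
    have hid : x' - 1 = (x - t ^ 2) * (t ^ 2)⁻¹ := by
      rw [hx']; field_simp
    rw [hid, v.ord_mul, aux_ord_inv v (ht2.trans (by norm_cast))]
    simpa using htlt
  obtain ⟨y, hy⟩ := aux_hensel v hdy hc (le_of_eq hx'0.symm) hx'1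
  refine ⟨t * ((y + 1) / 2), t * ((y - 1) / 2), ?_⟩
  have hx2 : x = t ^ 2 * x' := by
    rw [hx']; field_simp
  rw [hx2, hy]
  have h2 : (2 : F) ≠ 0 := two_ne_zero
  field_simp
  ring

end Analytic


/-- **Proposition 1.1.** Assume `F` is dyadic and let `B` be a reduced form of GK-type
`(a, σ)`. (1) If `n` is odd and `i₀ ∈ 𝒫⁰(σ)`, then `ord(b_(i₀ i₀)) ≡ ord(det B) mod 2`.
(2) If `n` is even and `ξ_B = 0`, then for every integer `k` there is `i₀ ∈ 𝒫⁰(σ)` with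
`ord(b_(i₀ i₀)) ≡ k mod 2`. -/
theorem reducedForm_fixedPoint_parity {F : Type*} [Field F] [CharZero F] (v : LocalFieldData F) {n : ℕ}
    (hdy : 0 < v.ord 2)
    (B : Matrix (Fin n) (Fin n) F) (hB : v.IsHalfIntegral B) (hnd : B.det ≠ 0)
    (a : Fin n → ℤ) (ha0 : ∀ i, 0 ≤ a i) (hmono : ∀ i j : Fin n, i ≤ j → a i ≤ a j)
    (σ : Equiv.Perm (Fin n)) (hadm : Admissible a σ) (hred : v.IsReducedForm B a σ) :
    (Odd n → ∀ i₀ : Fin n, σ i₀ = i₀ → v.ordZ (B i₀ i₀) % 2 = v.ordZ B.det % 2) ∧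
    (Even n → v.xi B = 0 →
      ∀ k : ℤ, ∃ i₀ : Fin n, σ i₀ = i₀ ∧ v.ordZ (B i₀ i₀) % 2 = k % 2) := by
  classical
  have h2ne : (2 : F) ≠ 0 := two_ne_zero
  obtain ⟨e, he⟩ := aux_exists_int v h2ne
  have he1 : 1 ≤ e := by
    rw [he] at hdy
    have : (0 : ℤ) < e := by exact_mod_cast hdy
    omega
  obtain ⟨hmemM, hpairR, hPminus, hdiagR, hoffR⟩ := hred
  have hredM : RedM v B a σ := by
    constructor
    · intro i j
      exact hB.1.apply i j
    · exact hadm.1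
    · exact hmemM.1
    · exact hdiagR
    · exact hpairR
    · intro i j hji hjσ
      exact wt_add_one_le (hoffR i j hji hjσ)
  have heven : Even (Finset.univ.filter (fun i : Fin n => σ i ≠ i)).card :=
    aux_even_card_nonfixed σ hadm.1
  have hcards : (Finset.univ.filter (fun i : Fin n => σ i = i)).card
      + (Finset.univ.filter (fun i : Fin n => σ i ≠ i)).card = n := by
    rw [Finset.card_filter_add_card_filter_not, Finset.card_univ, Fintype.card_fin]
  constructor
  · -- Part (1)
    intro hodd i₀ hi₀
    have hi₀s : i₀ ∈ Finset.univ.filter (fun i : Fin n => σ i = i) := by simp [hi₀]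
    have hf : ∀ i j : Fin n, σ i = i → σ j = j → i = j := by
      intro i j hifix hjfix
      by_contra hij
      have hsub : Finset.univ.filter (fun i : Fin n => σ i = i) ⊆ {i, j} := by
        intro x hx
        have hxfix : σ x = x := by simpa using hx
        simp only [Finset.mem_insert, Finset.mem_singleton]
        rcases hadm.2.1 i j x hifix hjfix hxfix with h | h | h
        · exact absurd h hij
        · exact Or.inl h.symm
        · exact Or.inr h.symm
      have hsup : ({i, j} : Finset (Fin n)) ⊆ Finset.univ.filter (fun i : Fin n => σ i = i) := by
        intro x hx
        simp only [Finset.mem_insert, Finset.mem_singleton] at hx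
        rcases hx with rfl | rfl <;> simp [hifix, hjfix]
      have hcard2 : (Finset.univ.filter (fun i : Fin n => σ i = i)).card = 2 := by
        rw [Finset.Subset.antisymm hsub hsup]
        exact Finset.card_pair hij
      rcases heven with ⟨k2, hk2⟩
      rcases hodd with ⟨kk, hkk⟩
      omega
    obtain ⟨t, ht⟩ := redM_det_ord v he he1 n (Fin n) B a σ (Fintype.card_fin n) hredM hf
    have hset : Finset.univ.filter (fun i : Fin n => σ i = i) = {i₀} :=
      Finset.eq_singleton_iff_unique_mem.2
        ⟨hi₀s, fun j hj => hf j i₀ (by simpa using hj) hi₀⟩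
    rw [hset, Finset.sum_singleton] at ht
    have hdetval : v.ordZ B.det = a i₀ + 2 * t := aux_ordZ_eq v ht
    have hbval : v.ordZ (B i₀ i₀) = a i₀ := aux_ordZ_eq v (hdiagR i₀ hi₀)
    rw [hbval, hdetval]
    omega
  · -- Part (2)
    intro hnEven hxi k
    by_cases hfix : ∃ i, σ i = i
    · obtain ⟨i, hifix⟩ := hfix
      have his : i ∈ Finset.univ.filter (fun i : Fin n => σ i = i) := by simp [hifix]
      have hjex : ∃ j ∈ Finset.univ.filter (fun i : Fin n => σ i = i), j ≠ i := by
        by_contra hall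
        push_neg at hall
        have hsingle : Finset.univ.filter (fun i : Fin n => σ i = i) = {i} :=
          Finset.eq_singleton_iff_unique_mem.2 ⟨his, hall⟩
        rcases heven with ⟨k2, hk2⟩
        rcases hnEven with ⟨mm, hmm⟩
        rw [hsingle, Finset.card_singleton] at hcards
        omega
      obtain ⟨j, hjs, hji⟩ := hjex
      have hjfix : σ j = j := by simpa using hjs
      have hpar := hadm.2.2.1 j i hjfix hifix hji
      have h1 : v.ordZ (B i i) = a i := aux_ordZ_eq v (hdiagR i hifix)
      have h2 : v.ordZ (B j j) = a j := aux_ordZ_eq v (hdiagR j hjfix)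
      by_cases hmatch : a i % 2 = k % 2
      · exact ⟨i, hifix, by rw [h1]; exact hmatch⟩
      · refine ⟨j, hjfix, ?_⟩
        rw [h2]
        omega
    · push_neg at hfix
      exfalso
      obtain ⟨m, c, hm, hcord, heq⟩ :=
        redM_det_sq v he he1 n (Fin n) B a σ (Fintype.card_fin n) hredM hfix
      rw [Fintype.card_fin] at heq
      have hDB : DB B = m ^ 2 * (1 + 4 * c) := by
        unfold DB
        exact heq
      unfold LocalFieldData.xi at hxi
      by_cases hsq : IsSq (DB B)
      · rw [if_pos hsq] at hxi
        exact one_ne_zero hxi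
      · rw [if_neg hsq] at hxi
        have hunr : v.UnramifiedQuadratic (DB B) := by
          refine ⟨hsq, ?_⟩
          intro x hx
          obtain ⟨aa, bb, hab⟩ := aux_norm v hdy hcord x hx
          refine ⟨aa, bb / m, ?_⟩
          rw [hDB, hab]
          field_simp
        rw [if_pos hunr] at hxi
        exact (by norm_num : (-1 : ℤ) ≠ 0) hxi

end
end
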